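/- arXiv:1609.09780 — 10 statements merged into one kernel-verified Lean document; each statement's English description precedes it below -/
import Mathlib

section
/- Let V be a 2-dimensional symplectic ℂ-vector space and W an orthogonal ℂ-vector space. The map (B₁,B₂,i) ↦ (tr B₁, tr B₂, i) is a bijection from {(B₁,B₂,i) ∈ 𝔭(V) × 𝔭(V) × Hom(W,V) : [B₁,B₂] + ii* = 0} onto ℂ² × {i ∈ Hom(W,V) : ii* = 0}. -/
lemma selfadj_scalar {V : Type} [AddCommGroup V] [Module ℂ V] [FiniteDimensional ℂ V]
    (BV : LinearMap.BilinForm ℂ V) (hnd : BV.Nondegenerate)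
    (halt : ∀ u v : V, BV u v = -BV v u) (h2 : Module.finrank ℂ V = 2)
    (B : Module.End ℂ V) (hB : ∀ u v : V, BV (B u) v = BV u (B v)) :
    ∃ c : ℂ, B = c • (1 : Module.End ℂ V) := by
  have hselfz : ∀ u : V, BV u u = 0 := fun u => by linear_combination (halt u u) / 2
  have heig : ∀ u : V, ∃ c : ℂ, B u = c • u := by
    intro u
    by_cases hu : u = 0
    · exact ⟨0, by simp [hu]⟩
    set f : V →ₗ[ℂ] ℂ := BV u with hf
    have hfne : f ≠ 0 := by
      intro h
      apply hu
      apply hnd.1 u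
      intro n
      simpa [hf] using congrFun (congrArg DFunLike.coe h) n
    have hspan_le : Submodule.span ℂ {u} ≤ LinearMap.ker f := by
      rw [Submodule.span_singleton_le_iff_mem]
      simpa [hf] using hselfz u
    have hrange : Module.finrank ℂ (LinearMap.range f) = 1 := by
      have hle : Module.finrank ℂ (LinearMap.range f) ≤ 1 := by
        simpa using Submodule.finrank_le (LinearMap.range f)
      have hne : Module.finrank ℂ (LinearMap.range f) ≠ 0 := by
        simp only [ne_eq, Submodule.finrank_eq_zero]
        simpa [LinearMap.range_eq_bot] using hfne
      omega
    have hker : Module.finrank ℂ (LinearMap.ker f) = 1 := by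
      have := LinearMap.finrank_range_add_finrank_ker f
      omega
    have hspanrank : Module.finrank ℂ (Submodule.span ℂ {u}) = 1 :=
      finrank_span_singleton hu
    have heq : Submodule.span ℂ {u} = LinearMap.ker f :=
      Submodule.eq_of_le_of_finrank_eq hspan_le (by omega)
    have hmem : B u ∈ LinearMap.ker f := by
      have : BV u (B u) = 0 := by
        linear_combination (-(hB u u) + halt (B u) u) / 2
      simpa [hf] using this
    rw [← heq, Submodule.mem_span_singleton] at hmem
    obtain ⟨c, hc⟩ := hmem
    exact ⟨c, hc.symm⟩
  have b := Module.finBasis ℂ V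
  rw [h2] at b
  obtain ⟨a, ha⟩ := heig (b 0)
  obtain ⟨c, hc⟩ := heig (b 1)
  obtain ⟨d, hd⟩ := heig (b 0 + b 1)
  have hli := b.linearIndependent
  rw [Fintype.linearIndependent_iff] at hli
  have hsum : (a - d) • b 0 + (c - d) • b 1 = 0 := by
    have h : d • b 0 + d • b 1 = a • b 0 + c • b 1 := by
      rw [← smul_add, ← hd, map_add, ha, hc]
    linear_combination (norm := module) -h
  have h0 := hli ![a - d, c - d] (by simpa [Fin.sum_univ_two] using hsum)
  have ha' : a = d := by have := h0 0; simp at this; linear_combination this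
  have hc' : c = d := by have := h0 1; simp at this; linear_combination this
  refine ⟨d, ?_⟩
  apply b.ext
  intro i
  fin_cases i
  · simpa [ha'] using ha
  · simpa [hc'] using hc

/-- The space of ADHM data `(B₁, B₂, i, j)` with `j = i*`: `B₁, B₂` self-adjoint,
`j` adjoint to `i`, and `[B₁,B₂] + i i* = 0`. -/
def ADHMData (V W : Type) [AddCommGroup V] [Module ℂ V]
    [AddCommGroup W] [Module ℂ W]
    (BV : LinearMap.BilinForm ℂ V) (BW : LinearMap.BilinForm ℂ W) : Type :=
  {p : (Module.End ℂ V × Module.End ℂ V) × (W →ₗ[ℂ] V) × (V →ₗ[ℂ] W) //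
    (∀ u v : V, BV (p.1.1 u) v = BV u (p.1.1 v)) ∧
    (∀ u v : V, BV (p.1.2 u) v = BV u (p.1.2 v)) ∧
    (∀ (w : W) (v : V), BW w (p.2.2 v) = BV (p.2.1 w) v) ∧
    p.1.1 * p.1.2 - p.1.2 * p.1.1 + p.2.1 ∘ₗ p.2.2 = 0}

/-- The map `(B₁, B₂, i, i*) ↦ (tr B₁, tr B₂, i)`. -/
noncomputable def ADHMTraceMap (V W : Type) [AddCommGroup V] [Module ℂ V]
    [AddCommGroup W] [Module ℂ W]
    (BV : LinearMap.BilinForm ℂ V) (BW : LinearMap.BilinForm ℂ W) :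
    ADHMData V W BV BW → ℂ × ℂ × (W →ₗ[ℂ] V) :=
  fun p => (LinearMap.trace ℂ V p.val.1.1, LinearMap.trace ℂ V p.val.1.2, p.val.2.1)

/-- Let `V` be a 2-dimensional symplectic ℂ-vector space and `W` an
orthogonal ℂ-vector space.  The map `(B₁,B₂,i) ↦ (tr B₁, tr B₂, i)` is a bijection
from `{(B₁,B₂,i) ∈ 𝔭(V)² × Hom(W,V) : [B₁,B₂] + i i* = 0}` onto
`ℂ² × {i : i i* = 0}`. -/
theorem stmt2
    (V W : Type) [AddCommGroup V] [Module ℂ V] [FiniteDimensional ℂ V]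
    [AddCommGroup W] [Module ℂ W] [FiniteDimensional ℂ W]
    (BV : LinearMap.BilinForm ℂ V) (BW : LinearMap.BilinForm ℂ W)
    (hVnd : BV.Nondegenerate) (hWnd : BW.Nondegenerate)
    (hVsymp : ∀ u v : V, BV u v = -BV v u)
    (hWorth : ∀ u v : W, BW u v = BW v u)
    (hV2 : Module.finrank ℂ V = 2) :
    Function.Injective (ADHMTraceMap V W BV BW) ∧
    Set.range (ADHMTraceMap V W BV BW) =
      {y : ℂ × ℂ × (W →ₗ[ℂ] V) | ∃ j : V →ₗ[ℂ] W,
        (∀ (w : W) (v : V), BW w (j v) = BV (y.2.2 w) v) ∧ y.2.2 ∘ₗ j = 0} := by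
  have htr : ∀ c : ℂ, LinearMap.trace ℂ V (c • (1 : Module.End ℂ V)) = 2 * c := by
    intro c; simp [LinearMap.trace_one, hV2]; ring
  have hjdet : ∀ (i : W →ₗ[ℂ] V) (j j' : V →ₗ[ℂ] W),
      (∀ (w : W) (v : V), BW w (j v) = BV (i w) v) →
      (∀ (w : W) (v : V), BW w (j' v) = BV (i w) v) → j = j' := by
    intro i j j' hj hj'
    ext v
    have hz : ∀ w : W, BW (j v - j' v) w = 0 := by
      intro w
      rw [hWorth]
      simp only [map_sub]
      rw [sub_eq_zero]
      exact (hj w v).trans (hj' w v).symm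
    have := hWnd.1 _ hz
    rwa [sub_eq_zero] at this
  constructor
  · -- injectivity
    rintro ⟨⟨⟨B1, B2⟩, i, j⟩, h1, h2, h3, h4⟩ ⟨⟨⟨B1', B2'⟩, i', j'⟩, h1', h2', h3', h4'⟩ heq
    simp only [ADHMTraceMap, Prod.mk.injEq] at heq
    obtain ⟨ht1, ht2, hi⟩ := heq
    obtain ⟨c1, hc1⟩ := selfadj_scalar BV hVnd hVsymp hV2 B1 h1
    obtain ⟨c2, hc2⟩ := selfadj_scalar BV hVnd hVsymp hV2 B2 h2
    obtain ⟨c1', hc1'⟩ := selfadj_scalar BV hVnd hVsymp hV2 B1' h1'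
    obtain ⟨c2', hc2'⟩ := selfadj_scalar BV hVnd hVsymp hV2 B2' h2'
    rw [hc1, hc1', htr, htr] at ht1
    rw [hc2, hc2', htr, htr] at ht2
    have hB1 : B1 = B1' := by
      rw [hc1, hc1']; congr 1; linear_combination ht1 / 2
    have hB2 : B2 = B2' := by
      rw [hc2, hc2']; congr 1; linear_combination ht2 / 2
    have hj : j = j' := by
      apply hjdet i
      · exact h3
      · intro w v; rw [hi]; exact h3' w v
    apply Subtype.ext
    simp only [hB1, hB2, hi, hj]
  · -- range
    ext y
    constructor
    · rintro ⟨⟨⟨⟨B1, B2⟩, i, j⟩, h1, h2, h3, h4⟩, rfl⟩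
      refine ⟨j, h3, ?_⟩
      obtain ⟨c1, hc1⟩ := selfadj_scalar BV hVnd hVsymp hV2 B1 h1
      obtain ⟨c2, hc2⟩ := selfadj_scalar BV hVnd hVsymp hV2 B2 h2
      have hcomm : B1 * B2 - B2 * B1 = 0 := by
        rw [hc1, hc2]; simp [smul_smul, mul_comm c1 c2]
      have := h4
      simp only at this
      rw [hcomm, zero_add] at this
      exact this
    · rintro ⟨j, hadj, hij⟩
      obtain ⟨t1, t2, i⟩ := y
      simp only at hadj hij ⊢
      refine ⟨⟨(((t1 / 2) • 1, (t2 / 2) • 1), i, j), ?_, ?_, hadj, ?_⟩, ?_⟩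
      · intro u v; simp
      · intro u v; simp
      · simp only
        rw [show ((t1 / 2) • (1 : Module.End ℂ V)) * ((t2 / 2) • 1) -
            ((t2 / 2) • 1) * ((t1 / 2) • 1) = 0 by
          simp [smul_smul, mul_comm (t1 / 2) (t2 / 2)], zero_add]
        exact hij
      · simp only [ADHMTraceMap, htr, Prod.mk.injEq]
        exact ⟨by ring, by ring, trivial⟩
end

section
/- Let V be a 2-dimensional symplectic ℂ-vector space and W an orthogonal ℂ-vector space with dim W ≤ 3. Then every triple (B₁,B₂,i) ∈ 𝔭(V) × 𝔭(V) × Hom(W,V) satisfying [B₁,B₂] + ii* = 0 fails to be costable: there exists a nonzero subspace T ⊆ V with B₁T ⊆ T, B₂T ⊆ T and T ⊆ ker i*. (Hence the regular locus μ⁻¹(0)^{reg} is empty when k = 2 and N ≤ 3.) -/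
open Module

/-- A self-adjoint endomorphism of a 2-dimensional symplectic space is scalar. -/
lemma aux_scalar (V : Type) [AddCommGroup V] [Module ℂ V] [FiniteDimensional ℂ V]
    (BV : LinearMap.BilinForm ℂ V) (hVnd : BV.Nondegenerate)
    (hVsymp : ∀ u v : V, BV u v = -BV v u)
    (hV2 : Module.finrank ℂ V = 2)
    (B : Module.End ℂ V) (hB : ∀ u v : V, BV (B u) v = BV u (B v)) :
    ∃ c : ℂ, B = c • (1 : Module.End ℂ V) := by
  have halt : ∀ u : V, BV u u = 0 := by
    intro u
    have h2 : (2:ℂ) * BV u u = 0 := by linear_combination hVsymp u u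
    simpa using mul_eq_zero.mp h2
  have h0 : 0 < Module.finrank ℂ V := by omega
  have : Nontrivial V := (Module.finrank_pos_iff (R := ℂ)).mp h0
  obtain ⟨e₁, he₁⟩ := exists_ne (0 : V)
  have hne : ∃ v : V, BV e₁ v ≠ 0 := by
    by_contra h
    push_neg at h
    exact he₁ (hVnd.1 e₁ h)
  obtain ⟨v, hv⟩ := hne
  set e₂ : V := (BV e₁ v)⁻¹ • v with he₂def
  have h12 : BV e₁ e₂ = 1 := by
    simp [he₂def, inv_mul_cancel₀ hv]
  have h21 : BV e₂ e₁ = -1 := by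
    rw [hVsymp e₂ e₁, h12]
  have hli : LinearIndependent ℂ ![e₁, e₂] := by
    rw [LinearIndependent.pair_iff]
    intro s t hst
    have h1 : BV e₁ (s • e₁ + t • e₂) = 0 := by rw [hst]; simp
    have h2 : BV (s • e₁ + t • e₂) e₂ = 0 := by rw [hst]; simp
    simp [halt, h12, h21] at h1 h2
    exact ⟨h2, h1⟩
  have hspan : Submodule.span ℂ (Set.range ![e₁, e₂]) = ⊤ := by
    apply Submodule.eq_top_of_finrank_eq
    rw [finrank_span_eq_card hli, hV2]
    simp
  have hrange : (Set.range ![e₁, e₂]) = {e₁, e₂} := by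
    ext x; simp [Matrix.range_cons, Matrix.range_empty]; tauto
  have hspan' : ∀ x : V, x ∈ Submodule.span ℂ ({e₁, e₂} : Set V) := by
    intro x
    rw [← hrange, hspan]; trivial
  refine ⟨BV (B e₁) e₂, ?_⟩
  set c := BV (B e₁) e₂ with hc
  have hBe1e1 : BV (B e₁) e₁ = 0 := by
    have h2 : (2:ℂ) * BV (B e₁) e₁ = 0 := by
      linear_combination hB e₁ e₁ + hVsymp e₁ (B e₁)
    simpa using mul_eq_zero.mp h2
  have hBe2e2 : BV (B e₂) e₂ = 0 := by
    have h2 : (2:ℂ) * BV (B e₂) e₂ = 0 := by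
      linear_combination hB e₂ e₂ + hVsymp e₂ (B e₂)
    simpa using mul_eq_zero.mp h2
  have hBe2e1 : BV (B e₂) e₁ = -c := by
    show BV (B e₂) e₁ = -(BV (B e₁) e₂)
    linear_combination hB e₂ e₁ + hVsymp e₂ (B e₁)
  have key : ∀ x : V, (∀ y ∈ ({e₁, e₂} : Set V), BV x y = 0) → x = 0 := by
    intro x hx
    apply hVnd.1
    intro n
    induction hspan' n using Submodule.span_induction with
    | mem y hy => exact hx y hy
    | zero => simp
    | add a b _ _ ha hb => simp [ha, hb]
    | smul a y _ hy => simp [hy]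
  have hBe₁ : B e₁ = c • e₁ := by
    rw [← sub_eq_zero]
    apply key
    rintro y (rfl | rfl)
    · simp [hBe1e1, halt]
    · simp [hc, h12]
  have hBe₂ : B e₂ = c • e₂ := by
    rw [← sub_eq_zero]
    apply key
    rintro y (rfl | rfl)
    · simp [hBe2e1, h21]
    · simp [hBe2e2, halt]
  have hall : ∀ x : V, B x = c • x := by
    intro x
    induction hspan' x using Submodule.span_induction with
    | mem y hy => rcases hy with rfl | rfl; exacts [hBe₁, hBe₂]
    | zero => simp
    | add a b _ _ ha hb => rw [map_add, ha, hb, smul_add]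
    | smul a y _ hy => rw [map_smul, hy, smul_comm]
  exact LinearMap.ext fun x => by
    rw [hall x, LinearMap.smul_apply, Module.End.one_apply]

/-- Let `V` be a 2-dimensional symplectic ℂ-vector space and `W` an
orthogonal ℂ-vector space with `dim W ≤ 3`.  Every ADHM datum `(B₁, B₂, i)` (with
`j = i*` the adjoint of `i`) satisfying `[B₁,B₂] + i i* = 0` fails to be costable:
there is a nonzero subspace `T ⊆ V` with `B₁ T ⊆ T`, `B₂ T ⊆ T` and `T ⊆ ker i*`. -/
theorem stmt5
    (V W : Type) [AddCommGroup V] [Module ℂ V] [FiniteDimensional ℂ V]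
    [AddCommGroup W] [Module ℂ W] [FiniteDimensional ℂ W]
    (BV : LinearMap.BilinForm ℂ V) (BW : LinearMap.BilinForm ℂ W)
    (hVnd : BV.Nondegenerate) (hWnd : BW.Nondegenerate)
    (hVsymp : ∀ u v : V, BV u v = -BV v u)
    (hWorth : ∀ u v : W, BW u v = BW v u)
    (hV2 : Module.finrank ℂ V = 2) (hW3 : Module.finrank ℂ W ≤ 3)
    (B₁ B₂ : Module.End ℂ V) (i : W →ₗ[ℂ] V) (j : V →ₗ[ℂ] W)
    (hB₁ : ∀ u v : V, BV (B₁ u) v = BV u (B₁ v))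
    (hB₂ : ∀ u v : V, BV (B₂ u) v = BV u (B₂ v))
    (hadj : ∀ (w : W) (v : V), BW w (j v) = BV (i w) v)
    (hADHM : B₁ * B₂ - B₂ * B₁ + i ∘ₗ j = 0) :
    ∃ T : Submodule ℂ V, T ≠ ⊥ ∧ T.map B₁ ≤ T ∧ T.map B₂ ≤ T ∧
      T ≤ LinearMap.ker j := by
  obtain ⟨c₁, hc₁⟩ := aux_scalar V BV hVnd hVsymp hV2 B₁ hB₁
  obtain ⟨c₂, hc₂⟩ := aux_scalar V BV hVnd hVsymp hV2 B₂ hB₂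
  have hcomm : B₁ * B₂ - B₂ * B₁ = 0 := by
    rw [hc₁, hc₂]
    ext v
    simp only [LinearMap.sub_apply, Module.End.mul_apply, LinearMap.smul_apply,
      Module.End.one_apply, LinearMap.zero_apply, smul_smul, mul_comm c₁ c₂, sub_self]
  have hij : i ∘ₗ j = 0 := by
    rw [hcomm, zero_add] at hADHM
    exact hADHM
  -- ker j = orthogonal complement of range i in V
  have hreflV : BV.IsRefl := by
    intro u v h
    rw [hVsymp v u, h, neg_zero]
  have hkerj : LinearMap.ker j = BV.orthogonal (LinearMap.range i) := by
    ext x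
    rw [LinearMap.mem_ker, LinearMap.BilinForm.mem_orthogonal_iff]
    constructor
    · rintro hx n ⟨w, rfl⟩
      show BV (i w) x = 0
      rw [← hadj, hx, map_zero]
    · intro h
      apply hWnd.1
      intro w
      rw [hWorth, hadj]
      exact h (i w) ⟨w, rfl⟩
  -- rank i = rank j
  have hrkV := LinearMap.finrank_range_add_finrank_ker j
  have hrkW := LinearMap.finrank_range_add_finrank_ker i
  have horth := LinearMap.BilinForm.finrank_orthogonal hVnd (LinearMap.range i)
  rw [← hkerj] at horth
  -- range j ≤ ker i
  have hrange_le : LinearMap.range j ≤ LinearMap.ker i := by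
    rintro _ ⟨v, rfl⟩
    have := LinearMap.congr_fun hij v
    simpa using this
  have hle : finrank ℂ (LinearMap.range j) ≤ finrank ℂ (LinearMap.ker i) :=
    Submodule.finrank_mono hrange_le
  have hriV : finrank ℂ (LinearMap.range i) ≤ finrank ℂ V := Submodule.finrank_le _
  rw [hV2] at hrkV horth
  -- combine: 2 * rank j ≤ 3
  have hkerj_pos : 0 < finrank ℂ (LinearMap.ker j) := by omega
  refine ⟨LinearMap.ker j, ?_, ?_, ?_, le_refl _⟩
  · intro h
    rw [h, finrank_bot] at hkerj_pos
    omega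
  · rintro _ ⟨x, hx, rfl⟩
    have hx' : j x = 0 := hx
    rw [hc₁, LinearMap.mem_ker]
    show j (c₁ • x) = 0
    rw [map_smul, hx', smul_zero]
  · rintro _ ⟨x, hx, rfl⟩
    have hx' : j x = 0 := hx
    rw [hc₂, LinearMap.mem_ker]
    show j (c₂ • x) = 0
    rw [map_smul, hx', smul_zero]
end

section
/- Let V be a 4-dimensional symplectic ℂ-vector space and W a 2-dimensional orthogonal ℂ-vector space. Then every triple (B₁,B₂,i) ∈ 𝔭(V) × 𝔭(V) × Hom(W,V) satisfying [B₁,B₂] + ii* = 0 fails to be costable: there exists a nonzero subspace T ⊆ V with B₁T ⊆ T, B₂T ⊆ T and T ⊆ ker i*. (Hence the regular locus μ⁻¹(0)^{reg} is empty when N = 2 and k = 4.) -/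
/-- Let `V` be a 4-dimensional symplectic ℂ-vector space and `W` a
2-dimensional orthogonal ℂ-vector space.  Every triple `(B₁, B₂, i)` (with `j = i*`)
satisfying `[B₁,B₂] + i i* = 0` fails to be costable. -/
theorem stmt7
    (V W : Type) [AddCommGroup V] [Module ℂ V] [FiniteDimensional ℂ V]
    [AddCommGroup W] [Module ℂ W] [FiniteDimensional ℂ W]
    (BV : LinearMap.BilinForm ℂ V) (BW : LinearMap.BilinForm ℂ W)
    (hVnd : BV.Nondegenerate) (hWnd : BW.Nondegenerate)
    (hVsymp : ∀ u v : V, BV u v = -BV v u)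
    (hWorth : ∀ u v : W, BW u v = BW v u)
    (hV4 : Module.finrank ℂ V = 4) (hW2 : Module.finrank ℂ W = 2)
    (B₁ B₂ : Module.End ℂ V) (i : W →ₗ[ℂ] V) (j : V →ₗ[ℂ] W)
    (hB₁ : ∀ u v : V, BV (B₁ u) v = BV u (B₁ v))
    (hB₂ : ∀ u v : V, BV (B₂ u) v = BV u (B₂ v))
    (hadj : ∀ (w : W) (v : V), BW w (j v) = BV (i w) v)
    (hADHM : B₁ * B₂ - B₂ * B₁ + i ∘ₗ j = 0) :
    ∃ T : Submodule ℂ V, T ≠ ⊥ ∧ T.map B₁ ≤ T ∧ T.map B₂ ≤ T ∧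
      T ≤ LinearMap.ker j := by
  have hW : ∃ wp wm : W, BW wp wp = 0 ∧ BW wm wm = 0 ∧ BW wp wm = 1 ∧ BW wm wp = 1 ∧
      ∀ x : W, ∃ a b : ℂ, x = a • wp + b • wm := by
    have hsymm : BW.IsSymm := ⟨fun u v => by simpa using hWorth u v⟩
    obtain ⟨e, he⟩ := LinearMap.BilinForm.exists_orthogonal_basis (LinearMap.BilinForm.isSymm_iff.1 hsymm)
    set i0 : Fin (Module.finrank ℂ W) := ⟨0, by omega⟩ with hi0
    set i1 : Fin (Module.finrank ℂ W) := ⟨1, by omega⟩ with hi1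
    have hne : i0 ≠ i1 := by simp [hi0, hi1, Fin.ext_iff]
    have h01 : BW (e i0) (e i1) = 0 := he hne
    have h10 : BW (e i1) (e i0) = 0 := he (Ne.symm hne)
    have hdiag : ∀ k : Fin (Module.finrank ℂ W), BW (e k) (e k) ≠ 0 := fun k =>
      he.not_isOrtho_basis_self_of_separatingLeft hWnd.1 k
    set a := BW (e i0) (e i0) with ha
    set b := BW (e i1) (e i1) with hb
    obtain ⟨t, ht⟩ := IsAlgClosed.exists_eq_mul_self (-(a * b⁻¹))
    have hb0 : b ≠ 0 := hdiag i1
    have ha0 : a ≠ 0 := hdiag i0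
    have ht2 : t * t * b = -a := by
      rw [← ht]; field_simp
    have ht0 : t ≠ 0 := by
      intro h; rw [h] at ht2; simp at ht2; exact ha0 ht2
    have key : ∀ s : ℂ, BW (e i0 + s • e i1) (e i0 + t • e i1) = a + s * t * b := by
      intro s
      simp only [map_add, map_smul, LinearMap.add_apply, LinearMap.smul_apply, smul_eq_mul]
      rw [← ha, h01, h10, ← hb]; ring
    have key2 : ∀ s : ℂ, BW (e i0 + s • e i1) (e i0 - t • e i1) = a - s * t * b := by
      intro s
      simp only [map_add, map_sub, map_smul, LinearMap.add_apply, LinearMap.sub_apply,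
        LinearMap.smul_apply, smul_eq_mul]
      rw [← ha, h01, h10, ← hb]; ring
    have key3 : ∀ s : ℂ, BW (e i0 - s • e i1) (e i0 + t • e i1) = a + s * t * b - s*t*b - s*t*b:= by
      intro s
      simp only [map_add, map_sub, map_smul, LinearMap.add_apply, LinearMap.sub_apply,
        LinearMap.smul_apply, smul_eq_mul]
      rw [← ha, h01, h10, ← hb]; ring
    have key4 : BW (e i0 - t • e i1) (e i0 - t • e i1) = a + t * t * b := by
      simp only [map_add, map_sub, map_smul, LinearMap.add_apply, LinearMap.sub_apply,
        LinearMap.smul_apply, smul_eq_mul]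
      rw [← ha, h01, h10, ← hb]; ring
    have ha2 : (2 : ℂ) * a ≠ 0 := by
      simp [ha0]
    refine ⟨e i0 + t • e i1, (2*a)⁻¹ • (e i0 - t • e i1), ?_, ?_, ?_, ?_, ?_⟩
    · rw [key t, ht2]; ring
    · simp only [map_smul, LinearMap.smul_apply, smul_eq_mul, key4]
      rw [ht2]; ring
    · simp only [map_smul, smul_eq_mul, key2 t]
      rw [ht2]; field_simp; ring
    · simp only [map_smul, LinearMap.smul_apply, smul_eq_mul, key3 t]
      rw [ht2]; field_simp; ring
    · intro x
      have hx : x ∈ Submodule.span ℂ {e i0 + t • e i1, (2*a)⁻¹ • (e i0 - t • e i1)} := by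
        have he0 : e i0 ∈ Submodule.span ℂ {e i0 + t • e i1, (2*a)⁻¹ • (e i0 - t • e i1)} := by
          apply Submodule.mem_span_pair.2
          refine ⟨2⁻¹, a, ?_⟩
          match_scalars <;> (field_simp; try ring)
        have he1 : e i1 ∈ Submodule.span ℂ {e i0 + t • e i1, (2*a)⁻¹ • (e i0 - t • e i1)} := by
          apply Submodule.mem_span_pair.2
          refine ⟨(2*t)⁻¹, -(a/t), ?_⟩
          match_scalars <;> (field_simp; try ring)
        have hsp : Submodule.span ℂ {e i0 + t • e i1, (2*a)⁻¹ • (e i0 - t • e i1)} = ⊤ := by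
          rw [eq_top_iff]
          intro y _
          have hy : y ∈ Submodule.span ℂ (Set.range e) := by
            rw [Module.Basis.span_eq]; trivial
          refine Submodule.span_le.2 ?_ hy
          rintro z ⟨k, rfl⟩
          have : k = i0 ∨ k = i1 := by
            rcases k with ⟨kv, hk⟩
            rw [hW2] at hk
            interval_cases kv
            · left; rfl
            · right; rfl
          rcases this with h | h <;> rw [h]
          · exact he0
          · exact he1
        rw [hsp]; trivial
      obtain ⟨c, d, hcd⟩ := Submodule.mem_span_pair.1 hx
      exact ⟨c, d, hcd.symm⟩
  obtain ⟨wp, wm, hpp, hmm, hpm, hmp, hspan⟩ := hW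
  classical
  -- the endomorphism words
  set F : Bool → Module.End ℂ V := fun b => bif b then B₂ else B₁ with hF
  set E : List Bool → Module.End ℂ V := fun Z => (Z.map F).prod with hE
  have E_nil : E [] = 1 := by simp [hE]
  have E_cons : ∀ a Z, E (a :: Z) = F a * E Z := by intro a Z; simp [hE]
  have E_append : ∀ Z Z', E (Z ++ Z') = E Z * E Z' := by
    intro Z Z'; simp [hE]
  have E_single : ∀ a, E [a] = F a := by intro a; simp [hE]
  have hFadj : ∀ (a) (u v : V), BV (F a u) v = BV u (F a v) := by
    intro a u v; cases a
    · exact hB₁ u v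
    · exact hB₂ u v
  have hEadj : ∀ (Z : List Bool) (u v : V), BV (E Z u) v = BV u (E Z.reverse v) := by
    intro Z
    induction Z with
    | nil => intro u v; simp [E_nil]
    | cons a Z ih =>
      intro u v
      rw [E_cons, List.reverse_cons, E_append, E_single]
      calc BV ((F a * E Z) u) v = BV (F a (E Z u)) v := rfl
        _ = BV (E Z u) (F a v) := hFadj a _ _
        _ = BV u (E Z.reverse (F a v)) := ih _ _
        _ = BV u ((E Z.reverse * F a) v) := rfl
  -- the two-sided span
  set ij : Module.End ℂ V := (i ∘ₗ j : V →ₗ[ℂ] V) with hij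
  have hCij : B₁ * B₂ - B₂ * B₁ = -ij := by
    rw [hij]; linear_combination (norm := module) hADHM
  set Msub : ℕ → Submodule ℂ (Module.End ℂ V) := fun d =>
    Submodule.span ℂ {X | ∃ A B : List Bool, A.length + B.length + 2 ≤ d ∧ X = E A * ij * E B}
    with hMsub
  have Mmono : ∀ {d d'}, d ≤ d' → Msub d ≤ Msub d' := by
    intro d d' hdd
    apply Submodule.span_mono
    rintro X ⟨A, B, hlen, rfl⟩
    exact ⟨A, B, le_trans hlen hdd, rfl⟩
  have MmulL : ∀ (a : Bool) {d} {X}, X ∈ Msub d → F a * X ∈ Msub (d+1) := by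
    intro a d X hX
    induction hX using Submodule.span_induction with
    | mem X hX =>
      obtain ⟨A, B, hlen, rfl⟩ := hX
      apply Submodule.subset_span
      refine ⟨a :: A, B, by simp; omega, ?_⟩
      rw [E_cons]; noncomm_ring
    | zero => rw [mul_zero]; exact Submodule.zero_mem _
    | add X Y _ _ hX hY => rw [mul_add]; exact Submodule.add_mem _ hX hY
    | smul c X _ hX => rw [mul_smul_comm]; exact Submodule.smul_mem _ _ hX
  have MmulR : ∀ (a : Bool) {d} {X}, X ∈ Msub d → X * F a ∈ Msub (d+1) := by
    intro a d X hX
    induction hX using Submodule.span_induction with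
    | mem X hX =>
      obtain ⟨A, B, hlen, rfl⟩ := hX
      apply Submodule.subset_span
      refine ⟨A, B ++ [a], by simp; omega, ?_⟩
      rw [E_append, E_single]; noncomm_ring
    | zero => rw [zero_mul]; exact Submodule.zero_mem _
    | add X Y _ _ hX hY => rw [add_mul]; exact Submodule.add_mem _ hX hY
    | smul c X _ hX => rw [smul_mul_assoc]; exact Submodule.smul_mem _ _ hX
  have L0 : ∀ (Z : List Bool) (a : Bool), F a * E Z - E Z * F a ∈ Msub (Z.length + 1) := by
    intro Z
    induction Z with
    | nil => intro a; rw [E_nil, mul_one, one_mul, sub_self]; exact Submodule.zero_mem _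
    | cons b Z ih =>
      intro a
      have hkey : F a * E (b :: Z) - E (b :: Z) * F a
          = F b * (F a * E Z - E Z * F a) + (F a * F b - F b * F a) * E Z := by
        rw [E_cons]; noncomm_ring
      rw [hkey]
      apply Submodule.add_mem
      · exact Mmono (by simp) (MmulL b (ih a))
      · have hgen : ij * E Z ∈ Msub (Z.length + 2) := by
          apply Submodule.subset_span
          exact ⟨[], Z, by simp, by rw [E_nil, one_mul]⟩
        cases a <;> cases b
        · show (B₁ * B₁ - B₁ * B₁) * E Z ∈ _
          rw [sub_self, zero_mul]; exact Submodule.zero_mem _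
        · show (B₁ * B₂ - B₂ * B₁) * E Z ∈ _
          rw [hCij, neg_mul]
          exact Submodule.neg_mem _ hgen
        · show (B₂ * B₁ - B₁ * B₂) * E Z ∈ _
          rw [show B₂ * B₁ - B₁ * B₂ = ij from by rw [← neg_sub, hCij, neg_neg]]
          exact hgen
        · show (B₂ * B₂ - B₂ * B₂) * E Z ∈ _
          rw [sub_self, zero_mul]; exact Submodule.zero_mem _
  have L1 : ∀ Z : List Bool, E Z - E Z.reverse ∈ Msub Z.length := by
    intro Z
    induction Z with
    | nil => simp only [List.reverse_nil, sub_self]; exact Submodule.zero_mem _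
    | cons a Z ih =>
      have hkey : E (a :: Z) - E ((a :: Z).reverse)
          = F a * (E Z - E Z.reverse) + (F a * E Z.reverse - E Z.reverse * F a) := by
        rw [List.reverse_cons, E_append, E_single, E_cons]; noncomm_ring
      rw [hkey]
      apply Submodule.add_mem
      · exact MmulL a ih
      · have := L0 Z.reverse a
        rw [List.length_reverse] at this
        exact this
  -- N and the diagonality predicate
  set NN : Module.End ℂ V → (W →ₗ[ℂ] W) := fun X => j ∘ₗ ((X : V →ₗ[ℂ] V) ∘ₗ i) with hNN
  have NN_gen : ∀ A B : List Bool, NN (E A * ij * E B) = NN (E A) ∘ₗ NN (E B) := by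
    intro A B
    ext w
    simp [hNN, hij, Module.End.mul_apply]
  set NP : (W →ₗ[ℂ] W) → Prop := fun n => BW wp (n wp) = 0 ∧ BW wm (n wm) = 0 with hNP
  have NPmul : ∀ {n m}, NP n → NP m → NP (n ∘ₗ m) := by
    rintro n m ⟨hn1, hn2⟩ ⟨hm1, hm2⟩
    obtain ⟨c, d, hcd⟩ := hspan (m wp)
    have hd : d = 0 := by rw [hcd] at hm1; simpa [hpp, hpm] using hm1
    obtain ⟨c', d', hcd'⟩ := hspan (m wm)
    have hc' : c' = 0 := by rw [hcd'] at hm2; simpa [hmm, hmp] using hm2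
    constructor
    · show BW wp (n (m wp)) = 0
      rw [hcd, hd]
      simp [hn1]
    · show BW wm (n (m wm)) = 0
      rw [hcd', hc']
      simp [hn2]
  have NP0 : NP 0 := by constructor <;> simp [hNP]
  have NPadd : ∀ {n m}, NP n → NP m → NP (n + m) := by
    rintro n m ⟨hn1, hn2⟩ ⟨hm1, hm2⟩
    constructor <;> simp [hNP, hn1, hn2, hm1, hm2]
  have NPsmul : ∀ (c : ℂ) {n}, NP n → NP (c • n) := by
    rintro c n ⟨hn1, hn2⟩
    constructor <;> simp [hNP, hn1, hn2]
  have NNadd : ∀ X Y, NN (X + Y) = NN X + NN Y := by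
    intro X Y; ext w; simp [hNN]
  have NNsmul : ∀ (c : ℂ) X, NN (c • X) = c • NN X := by
    intro c X; ext w; simp [hNN]
  have NNsub : ∀ X Y, NN (X - Y) = NN X - NN Y := by
    intro X Y; ext w; simp [hNN, LinearMap.sub_apply]
  have NN0 : NN 0 = 0 := by ext w; simp [hNN]
  -- the adjoint identity
  have I1 : ∀ (Z : List Bool) (w w' : W),
      BW w (NN (E Z) w') = - BW w' (NN (E Z.reverse) w) := by
    intro Z w w'
    have h1 : BW w (NN (E Z) w') = BV (i w) (E Z (i w')) := by
      rw [hNN]; exact hadj w _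
    have h2 : BV (E Z.reverse (i w)) (i w') = BV (i w) (E Z (i w')) := by
      rw [hEadj Z.reverse (i w) (i w'), List.reverse_reverse]
    have h3 : BW w' (NN (E Z.reverse) w) = BV (i w') (E Z.reverse (i w)) := by
      rw [hNN]; exact hadj w' _
    rw [h1, ← h2, h3, hVsymp]
  -- the main induction
  have HP : ∀ (n : ℕ) (Z : List Bool), Z.length ≤ n → NP (NN (E Z)) := by
    intro n
    induction n using Nat.strong_induction_on with
    | _ n IH =>
      intro Z hZ
      have hkey : NP (NN (E Z) - NN (E Z.reverse)) := by
        rw [← NNsub]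
        have hall : ∀ X ∈ Msub n, NP (NN X) := by
          intro X hX
          induction hX using Submodule.span_induction with
          | mem X hX =>
            obtain ⟨A, B, hlen, rfl⟩ := hX
            rw [NN_gen]
            exact NPmul (IH A.length (by omega) A le_rfl) (IH B.length (by omega) B le_rfl)
          | zero => rw [NN0]; exact NP0
          | add X Y _ _ hX hY => rw [NNadd]; exact NPadd hX hY
          | smul c X _ hX => rw [NNsmul]; exact NPsmul c hX
        exact hall _ (Mmono hZ (L1 Z))
      obtain ⟨hk1, hk2⟩ := hkey
      rw [LinearMap.sub_apply, map_sub, sub_eq_zero] at hk1 hk2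
      have e2 := I1 Z.reverse wp wp
      rw [List.reverse_reverse] at e2
      have e4 := I1 Z.reverse wm wm
      rw [List.reverse_reverse] at e4
      constructor
      · linear_combination (1/2 : ℂ) * (hk1.trans e2)
      · linear_combination (1/2 : ℂ) * (hk2.trans e4)
  have HPZ : ∀ Z : List Bool, NP (NN (E Z)) := fun Z => HP Z.length Z le_rfl
  have hNNapp : ∀ (Z : List Bool) (w : W), NN (E Z) w = j (E Z (i w)) := by
    intro Z w; rw [hNN]; rfl
  have hiso_p : ∀ (A B : List Bool), BV (E A (i wp)) (E B (i wp)) = 0 := by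
    intro A B
    rw [hEadj A (i wp) (E B (i wp))]
    have h1 : E A.reverse ((E B) (i wp)) = E (A.reverse ++ B) (i wp) := by
      rw [E_append]; rfl
    rw [h1, ← hadj wp _, ← hNNapp]
    exact (HPZ _).1
  have hiso_m : ∀ (A B : List Bool), BV (E A (i wm)) (E B (i wm)) = 0 := by
    intro A B
    rw [hEadj A (i wm) (E B (i wm))]
    have h1 : E A.reverse ((E B) (i wm)) = E (A.reverse ++ B) (i wm) := by
      rw [E_append]; rfl
    rw [h1, ← hadj wm _, ← hNNapp]
    exact (HPZ _).2
  set Sp := Submodule.span ℂ {v : V | ∃ Z : List Bool, v = E Z (i wp)} with hSpdef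
  set Sm := Submodule.span ℂ {v : V | ∃ Z : List Bool, v = E Z (i wm)} with hSmdef
  have hiwp : i wp ∈ Sp := Submodule.subset_span ⟨[], by rw [E_nil]; rfl⟩
  have hiwm : i wm ∈ Sm := Submodule.subset_span ⟨[], by rw [E_nil]; rfl⟩
  have hSpF : ∀ (a : Bool), ∀ v ∈ Sp, F a v ∈ Sp := by
    intro a v hv
    induction hv using Submodule.span_induction with
    | mem x hx =>
      obtain ⟨Z, rfl⟩ := hx
      exact Submodule.subset_span ⟨a :: Z, by rw [E_cons]; rfl⟩
    | zero => rw [map_zero]; exact Submodule.zero_mem _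
    | add x y _ _ hx hy => rw [map_add]; exact Submodule.add_mem _ hx hy
    | smul c x _ hx => rw [map_smul]; exact Submodule.smul_mem _ _ hx
  have hSmF : ∀ (a : Bool), ∀ v ∈ Sm, F a v ∈ Sm := by
    intro a v hv
    induction hv using Submodule.span_induction with
    | mem x hx =>
      obtain ⟨Z, rfl⟩ := hx
      exact Submodule.subset_span ⟨a :: Z, by rw [E_cons]; rfl⟩
    | zero => rw [map_zero]; exact Submodule.zero_mem _
    | add x y _ _ hx hy => rw [map_add]; exact Submodule.add_mem _ hx hy
    | smul c x _ hx => rw [map_smul]; exact Submodule.smul_mem _ _ hx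
  have hSpIso : ∀ x ∈ Sp, ∀ y ∈ Sp, BV x y = 0 := by
    intro x hx y hy
    induction hx, hy using Submodule.span_induction₂ with
    | mem_mem x y hx hy =>
      obtain ⟨A, rfl⟩ := hx; obtain ⟨B, rfl⟩ := hy; exact hiso_p A B
    | zero_left y hy => simp
    | zero_right x hx => simp
    | add_left x y z _ _ _ h1 h2 => simp [h1, h2]
    | add_right x y z _ _ _ h1 h2 => simp [h1, h2]
    | smul_left c x y _ _ h => simp [h]
    | smul_right c x y _ _ h => simp [h]
  have hSmIso : ∀ x ∈ Sm, ∀ y ∈ Sm, BV x y = 0 := by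
    intro x hx y hy
    induction hx, hy using Submodule.span_induction₂ with
    | mem_mem x y hx hy =>
      obtain ⟨A, rfl⟩ := hx; obtain ⟨B, rfl⟩ := hy; exact hiso_m A B
    | zero_left y hy => simp
    | zero_right x hx => simp
    | add_left x y z _ _ _ h1 h2 => simp [h1, h2]
    | add_right x y z _ _ _ h1 h2 => simp [h1, h2]
    | smul_left c x y _ _ h => simp [h]
    | smul_right c x y _ _ h => simp [h]
  have hrefl : BV.IsRefl := by
    intro u v huv
    rw [hVsymp, huv, neg_zero]
  have hdim_p : Module.finrank ℂ Sp ≤ 2 := by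
    have hle : Sp ≤ BV.orthogonal Sp := by
      intro v hv n hn
      exact hSpIso n hn v hv
    have h1 : Module.finrank ℂ Sp ≤ Module.finrank ℂ (BV.orthogonal Sp) :=
      Submodule.finrank_mono hle
    rw [LinearMap.BilinForm.finrank_orthogonal hVnd, hV4] at h1
    omega
  have hdim_m : Module.finrank ℂ Sm ≤ 2 := by
    have hle : Sm ≤ BV.orthogonal Sm := by
      intro v hv n hn
      exact hSmIso n hn v hv
    have h1 : Module.finrank ℂ Sm ≤ Module.finrank ℂ (BV.orthogonal Sm) :=
      Submodule.finrank_mono hle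
    rw [LinearMap.BilinForm.finrank_orthogonal hVnd, hV4] at h1
    omega
  -- case split
  by_cases hS : Sp ⊔ Sm = ⊤
  · -- hard case: derive False
    exfalso
    have hsum : Module.finrank ℂ Sp + Module.finrank ℂ Sm ≥ 4 := by
      have h1 := Submodule.finrank_sup_add_finrank_inf_eq Sp Sm
      rw [hS] at h1
      have h2 : Module.finrank ℂ (⊤ : Submodule ℂ V) = 4 := by
        rw [finrank_top, hV4]
      omega
    have hdp : Module.finrank ℂ Sp = 2 := by omega
    have hdm : Module.finrank ℂ Sm = 2 := by omega
    set v0 := i wp with hv0def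
    have hv0ne : v0 ≠ 0 := by
      intro h
      have hbotSp : Sp = ⊥ := by
        rw [hSpdef, Submodule.span_eq_bot]
        rintro x ⟨Z, rfl⟩
        rw [h, map_zero]
      rw [hbotSp, finrank_bot] at hdp
      omega
    have hjSp : ∀ v ∈ Sp, j v = (BV (i wm) v) • wp := by
      intro v hv
      obtain ⟨a, b, hab⟩ := hspan (j v)
      have h0 : BV (i wp) v = 0 := hSpIso _ hiwp _ hv
      have hbv : b = 0 := by
        have h1 : BW wp (j v) = b := by rw [hab]; simp [hpp, hpm]
        rw [hadj wp v, h0] at h1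
        exact h1.symm
      have hav : a = BV (i wm) v := by
        have h1 : BW wm (j v) = a := by rw [hab]; simp [hmm, hmp]
        rw [hadj wm v] at h1
        exact h1.symm
      rw [hab, hbv, hav]
      simp
    have hcommv : ∀ v ∈ Sp, B₁ (B₂ v) - B₂ (B₁ v) = -((BV (i wm) v) • v0) := by
      intro v hv
      have h1 : (B₁ * B₂ - B₂ * B₁) v = -(ij v) := by rw [hCij]; rfl
      have h2 : ij v = (BV (i wm) v) • v0 := by
        show i (j v) = _
        rw [hjSp v hv, map_smul, ← hv0def]
      rw [h2] at h1
      rw [← h1]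
      rfl
    have hexu : ∃ u ∈ Sp, u ∉ Submodule.span ℂ {v0} := by
      by_contra hcon
      push_neg at hcon
      have hle : Sp ≤ Submodule.span ℂ {v0} := hcon
      have := Submodule.finrank_mono hle
      rw [finrank_span_singleton hv0ne, hdp] at this
      omega
    obtain ⟨u, huSp, hu⟩ := hexu
    have hind : ∀ a b : ℂ, a • u + b • v0 = 0 → a = 0 ∧ b = 0 := by
      intro a b hab
      by_cases ha : a = 0
      · refine ⟨ha, ?_⟩
        rw [ha, zero_smul, zero_add] at hab
        rcases smul_eq_zero.1 hab with h | h
        · exact h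
        · exact absurd h hv0ne
      · exfalso
        apply hu
        rw [Submodule.mem_span_singleton]
        refine ⟨a⁻¹ * -b, ?_⟩
        have h1 : a • u = -(b • v0) := by
          linear_combination (norm := module) hab
        calc (a⁻¹ * -b) • v0 = a⁻¹ • ((-b) • v0) := by rw [smul_smul]
          _ = a⁻¹ • (a • u) := by rw [neg_smul, ← h1]
          _ = u := by rw [smul_smul, inv_mul_cancel₀ ha, one_smul]
    have hNle : Submodule.span ℂ {u, v0} ≤ Sp := by
      rw [Submodule.span_le]
      rintro x (rfl | rfl)
      · exact huSp
      · exact hiwp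
    have hNSp : Submodule.span ℂ {u, v0} = Sp := by
      apply Submodule.eq_of_le_of_finrank_le hNle
      rw [hdp]
      have h1 : Submodule.span ℂ {v0} < Submodule.span ℂ {u, v0} := by
        apply lt_of_le_of_ne
        · apply Submodule.span_mono
          intro x hx
          rw [hx]
          right; rfl
        · intro heq
          apply hu
          rw [heq]
          exact Submodule.subset_span (by left; rfl)
      have h2 : (⊥ : Submodule ℂ V) < Submodule.span ℂ {v0} := by
        rw [bot_lt_iff_ne_bot, Submodule.span_singleton_eq_bot.ne]
        exact hv0ne
      have g1 := Submodule.finrank_lt_finrank_of_lt h1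
      have g2 := Submodule.finrank_lt_finrank_of_lt h2
      rw [finrank_bot] at g2
      omega
    -- coefficients
    have hmem : ∀ x ∈ Sp, ∃ a b : ℂ, a • u + b • v0 = x := by
      intro x hx
      exact Submodule.mem_span_pair.1 (hNSp ▸ hx)
    obtain ⟨r, p, hB1v0⟩ := hmem (B₁ v0) (hSpF false v0 hiwp)
    obtain ⟨s, q, hB1u⟩ := hmem (B₁ u) (hSpF false u huSp)
    obtain ⟨r', p', hB2v0⟩ := hmem (B₂ v0) (hSpF true v0 hiwp)
    obtain ⟨s', q', hB2u⟩ := hmem (B₂ u) (hSpF true u huSp)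
    set t := BV (i wm) v0 with htdef
    set c := BV (i wm) u with hcdef
    have eqv0 : B₁ (B₂ v0) - B₂ (B₁ v0) = -(t • v0) := hcommv v0 hiwp
    have equ : B₁ (B₂ u) - B₂ (B₁ u) = -(c • v0) := hcommv u huSp
    have ecalc1 : (r'*s + p'*r - r*s' - p*r') • u
        + (r'*q + p'*p - r*q' - p*p' + t) • v0 = 0 := by
      rw [← hB2v0, ← hB1v0] at eqv0
      simp only [map_add, map_smul] at eqv0
      rw [← hB1u, ← hB1v0, ← hB2u, ← hB2v0] at eqv0
      linear_combination (norm := module) eqv0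
    have ecalc2 : (s'*s + q'*r - s*s' - q*r') • u
        + (s'*q + q'*p - s*q' - q*p' + c) • v0 = 0 := by
      rw [← hB2u, ← hB1u] at equ
      simp only [map_add, map_smul] at equ
      rw [← hB1u, ← hB1v0, ← hB2u, ← hB2v0] at equ
      linear_combination (norm := module) equ
    obtain ⟨A1, A2⟩ := hind _ _ ecalc1
    obtain ⟨A3, A4⟩ := hind _ _ ecalc2
    -- A3 : s'*s + q'*r - s*s' - q*r' = 0, i.e. q'r - qr' = 0
    have ht0 : t = 0 := by linear_combination A2 + A3
    have hc0 : c = 0 := by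
      by_cases hr : r = 0
      · have hr' : r' ≠ 0 := by
          intro hr'0
          apply hu
          have hB1v0' : B₁ v0 = p • v0 := by
            rw [← hB1v0, hr, zero_smul, zero_add]
          have hB2v0' : B₂ v0 = p' • v0 := by
            rw [← hB2v0, hr'0, zero_smul, zero_add]
          have hFv0 : ∀ a : Bool, ∃ k : ℂ, F a v0 = k • v0 := by
            intro a; cases a
            · exact ⟨p, hB1v0'⟩
            · exact ⟨p', hB2v0'⟩
          have hgen : ∀ Z : List Bool, E Z v0 ∈ Submodule.span ℂ {v0} := by
            intro Z
            induction Z with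
            | nil => rw [E_nil]; exact Submodule.mem_span_singleton_self v0
            | cons a Z ih =>
              rw [E_cons]
              obtain ⟨k, hk⟩ := Submodule.mem_span_singleton.1 ih
              obtain ⟨k', hk'⟩ := hFv0 a
              show F a (E Z v0) ∈ _
              rw [← hk, map_smul, hk', smul_smul]
              exact Submodule.smul_mem _ _ (Submodule.mem_span_singleton_self v0)
          have hSple : Sp ≤ Submodule.span ℂ {v0} := by
            rw [hSpdef, Submodule.span_le]
            rintro x ⟨Z, rfl⟩
            exact hgen Z
          exact hSple huSp
        have hcr : c * r' = 0 := by
          linear_combination q' * A1 + (s' - p') * A3 + r' * A4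
        exact (mul_eq_zero.1 hcr).resolve_right hr'
      · have hcr : c * r = 0 := by
          linear_combination q * A1 + (s - p) * A3 + r * A4
        exact (mul_eq_zero.1 hcr).resolve_right hr
    -- φ vanishes on Sp
    have hphi : ∀ v ∈ Sp, BV (i wm) v = 0 := by
      intro v hv
      obtain ⟨a, b, hab⟩ := hmem v hv
      rw [← hab, map_add, map_smul, map_smul]
      rw [← hcdef] at *
      show a • c + b • t = 0
      rw [hc0, ht0]
      simp
    -- i wm ∈ Sp
    have horth : Sp = BV.orthogonal Sp := by
      apply Submodule.eq_of_le_of_finrank_le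
      · intro v hv n hn
        exact hSpIso n hn v hv
      · rw [LinearMap.BilinForm.finrank_orthogonal hVnd, hV4, hdp]
    have hiwmSp : i wm ∈ Sp := by
      rw [horth]
      intro n hn
      show BV n (i wm) = 0
      rw [hVsymp, hphi n hn, neg_zero]
    have hSmSp : Sm ≤ Sp := by
      rw [hSmdef, Submodule.span_le]
      rintro x ⟨Z, rfl⟩
      induction Z with
      | nil => rw [E_nil]; exact hiwmSp
      | cons a Z ih =>
        rw [E_cons]
        exact hSpF a _ ih
    have htop : Sp = ⊤ := by
      rw [← hS, sup_eq_left.2 hSmSp]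
    rw [htop, finrank_top, hV4] at hdp
    omega
  · -- easy case
    set T := BV.orthogonal (Sp ⊔ Sm) with hT
    have hTbot : T ≠ ⊥ := by
      have hlt : Sp ⊔ Sm < ⊤ := lt_top_iff_ne_top.2 hS
      have h1 : Module.finrank ℂ ↥(Sp ⊔ Sm) < 4 := by
        have := Submodule.finrank_lt (K := ℂ) (V := V) hlt.ne
        omega
      have h2 : Module.finrank ℂ T = 4 - Module.finrank ℂ ↥(Sp ⊔ Sm) := by
        rw [hT, LinearMap.BilinForm.finrank_orthogonal hVnd, hV4]
      intro hbot
      rw [hbot, finrank_bot] at h2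
      omega
    have hsupF : ∀ (a : Bool), ∀ v ∈ Sp ⊔ Sm, F a v ∈ Sp ⊔ Sm := by
      intro a v hv
      obtain ⟨x, hx, y, hy, rfl⟩ := Submodule.mem_sup.1 hv
      rw [map_add]
      exact Submodule.add_mem _ (Submodule.mem_sup_left (hSpF a x hx))
        (Submodule.mem_sup_right (hSmF a y hy))
    have hTinv : ∀ (a : Bool), ∀ v ∈ T, F a v ∈ T := by
      intro a v hv n hn
      show BV n (F a v) = 0
      rw [← hFadj a n v]
      exact hv (F a n) (hsupF a n hn)
    refine ⟨T, hTbot, ?_, ?_, ?_⟩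
    · rintro x ⟨v, hv, rfl⟩
      exact hTinv false v hv
    · rintro x ⟨v, hv, rfl⟩
      exact hTinv true v hv
    · intro v hv
      rw [LinearMap.mem_ker]
      apply hWnd.1
      intro n
      rw [← hWorth n (j v), hadj n v]
      obtain ⟨a, b, rfl⟩ := hspan n
      have h1 : BV (i wp) v = 0 := hv _ (Submodule.mem_sup_left hiwp)
      have h2 : BV (i wm) v = 0 := hv _ (Submodule.mem_sup_right hiwm)
      simp [map_add, map_smul, LinearMap.add_apply, LinearMap.smul_apply, h1, h2]
end

section
/- Let V be a 4-dimensional symplectic ℂ-vector space and W a 2-dimensional orthogonal ℂ-vector space. If B₁, B₂ are trace-free self-adjoint endomorphisms of V and i ∈ Hom(W,V) satisfies [B₁,B₂] + ii* = 0, then (ii*)² = 0 and i*i = 0. -/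
open Matrix Module LinearMap

set_option maxHeartbeats 4000000 in
private theorem keyP (a₁ b₁ c₁ d₁ e₁ a₂ b₂ c₂ d₂ e₂ : ℂ)
    (P₁ P₂ : Matrix (Fin 4) (Fin 4) ℂ)
    (h₁ : P₁ = !![a₁,0,d₁,e₁; 0,a₁,b₁,c₁; c₁,-e₁,-a₁,0; -b₁,d₁,0,-a₁])
    (h₂ : P₂ = !![a₂,0,d₂,e₂; 0,a₂,b₂,c₂; c₂,-e₂,-a₂,0; -b₂,d₂,0,-a₂]) :
    (P₁ * P₂ - P₂ * P₁) * (P₁ * P₂ - P₂ * P₁)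
    = (Matrix.trace ((P₁ * P₂ - P₂ * P₁) * (P₁ * P₂ - P₂ * P₁)) / 4) •
      (1 : Matrix (Fin 4) (Fin 4) ℂ) := by
  subst h₁ h₂
  ext k l
  fin_cases k <;> fin_cases l <;>
    simp [Matrix.mul_apply, Fin.sum_univ_four, Matrix.trace, Matrix.diag,
      Matrix.one_apply] <;> ring

private theorem fm0 (h : 0 < 4) : (⟨0, h⟩ : Fin 4) = 0 := rfl
private theorem fm1 (h : 1 < 4) : (⟨1, h⟩ : Fin 4) = 1 := rfl
private theorem fm2 (h : 2 < 4) : (⟨2, h⟩ : Fin 4) = 2 := rfl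
private theorem fm3 (h : 3 < 4) : (⟨3, h⟩ : Fin 4) = 3 := rfl

private theorem param (M : Matrix (Fin 4) (Fin 4) ℂ)
    (h : Mᵀ * !![0,1,0,0; -1,0,0,0; 0,0,0,1; 0,0,-1,0]
       = !![(0:ℂ),1,0,0; -1,0,0,0; 0,0,0,1; 0,0,-1,0] * M)
    (ht : M.trace = 0) :
    M = !![M 0 0, 0, M 0 2, M 0 3; 0, M 0 0, M 1 2, M 1 3;
           M 1 3, -(M 0 3), -(M 0 0), 0; -(M 1 2), M 0 2, 0, -(M 0 0)] := by
  have E : ∀ k l : Fin 4, (Mᵀ * !![(0:ℂ),1,0,0; -1,0,0,0; 0,0,0,1; 0,0,-1,0]) k l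
      = (!![(0:ℂ),1,0,0; -1,0,0,0; 0,0,0,1; 0,0,-1,0] * M) k l := fun k l => by rw [h]
  simp only [Matrix.mul_apply, Matrix.transpose_apply, Fin.sum_univ_four] at E
  have e00 := E 0 0; have e11 := E 1 1; have e22 := E 2 2; have e33 := E 3 3
  have e01 := E 0 1; have e23 := E 2 3; have e02 := E 0 2; have e03 := E 0 3
  have e12 := E 1 2; have e13 := E 1 3
  simp [Matrix.vecHead, Matrix.vecTail] at e00 e11 e22 e33 e01 e23 e02 e03 e12 e13
  simp [Matrix.trace, Matrix.diag, Fin.sum_univ_four] at ht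
  ext k l
  fin_cases k <;> fin_cases l <;>
    simp [fm0, fm1, fm2, fm3] <;>
    first
      | rfl
      | (linear_combination e11/2)
      | (linear_combination -e00/2)
      | (linear_combination e33/2)
      | (linear_combination -e22/2)
      | (linear_combination e01)
      | (linear_combination -e01)
      | (linear_combination e03)
      | (linear_combination -e03)
      | (linear_combination e13)
      | (linear_combination -e13)
      | (linear_combination (ht + e01 + e23)/2)
      | (linear_combination (ht + e01 - e23)/2)
      | (linear_combination (-ht - e01 - e23)/2)
      | (linear_combination (-ht - e01 + e23)/2)
      | (linear_combination e02)
      | (linear_combination -e02)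
      | (linear_combination e12)
      | (linear_combination -e12)

private theorem fm0' (h : 0 < 4) : (⟨0, h⟩ : Fin 4) = 0 := rfl
private theorem fm1' (h : 1 < 4) : (⟨1, h⟩ : Fin 4) = 1 := rfl
private theorem fm2' (h : 2 < 4) : (⟨2, h⟩ : Fin 4) = 2 := rfl
private theorem fm3' (h : 3 < 4) : (⟨3, h⟩ : Fin 4) = 3 := rfl

private theorem hyp_pair {V : Type} [AddCommGroup V] [Module ℂ V]
    (B : LinearMap.BilinForm ℂ V) (hnd : B.Nondegenerate)
    (hnt : Nontrivial V) : ∃ x y : V, B x y = 1 := by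
  obtain ⟨x, hx⟩ := exists_ne (0 : V)
  have h : ¬∀ n, B x n = 0 := fun h => hx (hnd.1 x h)
  push_neg at h
  obtain ⟨u, hu⟩ := h
  exact ⟨x, (B x u)⁻¹ • u, by rw [_root_.map_smul, smul_eq_mul, inv_mul_cancel₀ hu]⟩

private theorem sympl_basis {V : Type} [AddCommGroup V] [Module ℂ V] [FiniteDimensional ℂ V]
    (B : LinearMap.BilinForm ℂ V) (hnd : B.Nondegenerate)
    (hskew : ∀ u v : V, B u v = -B v u) (h4 : Module.finrank ℂ V = 4) :
    ∃ b : Basis (Fin 4) ℂ V, ∀ k l, B (b k) (b l) =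
      !![(0:ℂ),1,0,0; -1,0,0,0; 0,0,0,1; 0,0,-1,0] k l := by
  classical
  have halt : ∀ v : V, B v v = 0 := by
    intro v
    have h := hskew v v
    have h2 : (2:ℂ) * B v v = 0 := by linear_combination h
    exact (mul_eq_zero.mp h2).resolve_left two_ne_zero
  have hrefl : B.IsRefl := fun x y h => by rw [hskew]; simp [h]
  have hnt : Nontrivial V := by
    rw [← Module.finrank_pos_iff (R := ℂ)]; omega
  obtain ⟨x1, y1, hxy1⟩ := hyp_pair B hnd hnt
  have hyx1 : B y1 x1 = -1 := by rw [hskew, hxy1]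
  set U : Submodule ℂ V := Submodule.span ℂ ({x1, y1} : Set V) with hU
  have hx1U : x1 ∈ U := Submodule.subset_span (by simp)
  have hy1U : y1 ∈ U := Submodule.subset_span (by simp [Set.mem_insert_iff])
  have hrestr : (B.restrict U).Nondegenerate := by
    refine (LinearMap.IsRefl.nondegenerate_iff_separatingLeft (B := B.restrict U) (fun x y h => hrefl x y h)).mpr ?_
    rintro ⟨z, hz⟩ h0
    obtain ⟨a, c, hac⟩ := Submodule.mem_span_pair.mp hz
    have h1 : B z x1 = 0 := h0 ⟨x1, hx1U⟩
    have h2 : B z y1 = 0 := h0 ⟨y1, hy1U⟩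
    rw [← hac] at h1 h2
    have ha : a = 0 := by
      rw [_root_.map_add, _root_.map_smul, _root_.map_smul, LinearMap.add_apply, LinearMap.smul_apply,
        LinearMap.smul_apply, hxy1, halt] at h2
      simpa using h2
    have hc : c = 0 := by
      rw [_root_.map_add, _root_.map_smul, _root_.map_smul, LinearMap.add_apply, LinearMap.smul_apply,
        LinearMap.smul_apply, hyx1, halt] at h1
      simp [ha] at h1
      simpa using h1
    exact Subtype.ext (show z = 0 by rw [← hac, ha, hc]; simp)
  have hcompl : IsCompl U (B.orthogonal U) :=
    B.isCompl_orthogonal_of_restrict_nondegenerate hrefl hrestr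
  set U' : Submodule ℂ V := B.orthogonal U with hU'
  have hU'nd : (B.restrict U').Nondegenerate := by
    refine (LinearMap.IsRefl.nondegenerate_iff_separatingLeft (B := B.restrict U') (fun x y h => hrefl x y h)).mpr ?_
    rintro ⟨z, hz⟩ h0
    refine Subtype.ext (hnd.1 z fun n => ?_)
    have hn : n ∈ U ⊔ U' := by rw [hcompl.sup_eq_top]; trivial
    obtain ⟨u, hu, w, hw, rfl⟩ := Submodule.mem_sup.mp hn
    have hzu : B z u = 0 := hrefl u z (hz u hu)
    have hzw : B z w = 0 := h0 ⟨w, hw⟩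
    rw [_root_.map_add, hzu, hzw, add_zero]
  have hfr : finrank ℂ U + finrank ℂ U' = 4 := by
    rw [Submodule.finrank_add_eq_of_isCompl hcompl, h4]
  have hU2 : finrank ℂ U ≤ 2 := by
    have h1 := finrank_span_le_card (R := ℂ) ({x1, y1} : Set V)
    have h2 : ({x1, y1} : Set V).toFinset.card ≤ 2 := by
      rw [Set.toFinset_insert, Set.toFinset_singleton]
      exact (Finset.card_insert_le _ _).trans (by simp)
    rw [hU]
    exact h1.trans h2
  have hnt' : Nontrivial U' := by
    rw [← Module.finrank_pos_iff (R := ℂ)]; omega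
  obtain ⟨x2', y2', hxy2'⟩ := hyp_pair (B.restrict U') hU'nd hnt'
  set x2 : V := (x2' : V) with hx2def
  set y2 : V := (y2' : V) with hy2def
  have hxy2 : B x2 y2 = 1 := hxy2'
  have hyx2 : B y2 x2 = -1 := by rw [hskew, hxy2]
  have hx2m : ∀ u ∈ U, B u x2 = 0 := fun u hu => x2'.2 u hu
  have hy2m : ∀ u ∈ U, B u y2 = 0 := fun u hu => y2'.2 u hu
  -- all orthogonality facts
  have h12 : B x1 x2 = 0 := hx2m x1 hx1U
  have h1y2 : B x1 y2 = 0 := hy2m x1 hx1U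
  have hy12 : B y1 x2 = 0 := hx2m y1 hy1U
  have hy1y2 : B y1 y2 = 0 := hy2m y1 hy1U
  have h21 : B x2 x1 = 0 := by rw [hskew, h12, neg_zero]
  have hy21 : B x2 y1 = 0 := by rw [hskew, hy12, neg_zero]
  have h2y1 : B y2 x1 = 0 := by rw [hskew, h1y2, neg_zero]
  have hy2y1 : B y2 y1 = 0 := by rw [hskew, hy1y2, neg_zero]
  have hli : LinearIndependent ℂ ![x1, y1, x2, y2] := by
    rw [Fintype.linearIndependent_iff]
    intro g hg
    have hsum : g 0 • x1 + g 1 • y1 + g 2 • x2 + g 3 • y2 = 0 := by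
      have := hg
      simpa [Fin.sum_univ_four, add_assoc] using this
    have e0 : g 0 = 0 := by
      have := congrArg (fun t => B t y1) hsum
      simpa [_root_.map_add, _root_.map_smul, halt, hxy1, hy2y1, hy21] using this
    have e1 : g 1 = 0 := by
      have := congrArg (fun t => B x1 t) hsum
      simpa [_root_.map_add, _root_.map_smul, halt, hxy1, h12, h1y2] using this
    have e2 : g 2 = 0 := by
      have := congrArg (fun t => B t y2) hsum
      simpa [_root_.map_add, _root_.map_smul, halt, hxy2, h1y2, hy1y2] using this
    have e3 : g 3 = 0 := by
      have := congrArg (fun t => B x2 t) hsum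
      simpa [_root_.map_add, _root_.map_smul, halt, hxy2, h21, hy21] using this
    intro k
    fin_cases k <;> assumption
  have hcardb : Fintype.card (Fin 4) = finrank ℂ V := by rw [h4]; simp
  let b := basisOfLinearIndependentOfCardEqFinrank hli hcardb
  have hb : ⇑b = ![x1, y1, x2, y2] := coe_basisOfLinearIndependentOfCardEqFinrank hli hcardb
  refine ⟨b, fun k l => ?_⟩
  have hbk : b k = ![x1, y1, x2, y2] k := by rw [hb]
  have hbl : b l = ![x1, y1, x2, y2] l := by rw [hb]
  rw [hbk, hbl]
  fin_cases k <;> fin_cases l <;>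
    simp [fm0', fm1', fm2', fm3', Matrix.vecHead, Matrix.vecTail, halt, hxy1, hyx1, hxy2, hyx2, h12, h1y2, hy12, hy1y2, h21, hy21, h2y1, hy2y1]

set_option maxHeartbeats 1000000 in
/-- Let `V` be a 4-dimensional symplectic ℂ-vector space and `W` a
2-dimensional orthogonal ℂ-vector space.  If `B₁, B₂` are trace-free self-adjoint
endomorphisms of `V` and `i : W → V` (with adjoint `j = i*`) satisfies
`[B₁,B₂] + i i* = 0`, then `(i i*)² = 0` and `i* i = 0`. -/
theorem stmt8
    (V W : Type) [AddCommGroup V] [Module ℂ V] [FiniteDimensional ℂ V]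
    [AddCommGroup W] [Module ℂ W] [FiniteDimensional ℂ W]
    (BV : LinearMap.BilinForm ℂ V) (BW : LinearMap.BilinForm ℂ W)
    (hVnd : BV.Nondegenerate) (hWnd : BW.Nondegenerate)
    (hVsymp : ∀ u v : V, BV u v = -BV v u)
    (hWorth : ∀ u v : W, BW u v = BW v u)
    (hV4 : Module.finrank ℂ V = 4) (hW2 : Module.finrank ℂ W = 2)
    (B₁ B₂ : Module.End ℂ V) (i : W →ₗ[ℂ] V) (j : V →ₗ[ℂ] W)
    (hB₁ : ∀ u v : V, BV (B₁ u) v = BV u (B₁ v))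
    (hB₂ : ∀ u v : V, BV (B₂ u) v = BV u (B₂ v))
    (htr₁ : LinearMap.trace ℂ V B₁ = 0) (htr₂ : LinearMap.trace ℂ V B₂ = 0)
    (hadj : ∀ (w : W) (v : V), BW w (j v) = BV (i w) v)
    (hADHM : B₁ * B₂ - B₂ * B₁ + i ∘ₗ j = 0) :
    (i ∘ₗ j) ∘ₗ (i ∘ₗ j) = 0 ∧ j ∘ₗ i = 0 := by
  classical
  obtain ⟨b, hGram⟩ := sympl_basis BV hVnd hVsymp hV4
  have hGmat : LinearMap.BilinForm.toMatrix b BV = !![(0:ℂ),1,0,0; -1,0,0,0; 0,0,0,1; 0,0,-1,0] := by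
    ext k l
    rw [LinearMap.BilinForm.toMatrix_apply]
    exact hGram k l
  have hsa : ∀ (Bi : Module.End ℂ V), (∀ u v : V, BV (Bi u) v = BV u (Bi v)) →
      (LinearMap.toMatrix b b Bi)ᵀ * !![(0:ℂ),1,0,0; -1,0,0,0; 0,0,0,1; 0,0,-1,0]
        = !![(0:ℂ),1,0,0; -1,0,0,0; 0,0,0,1; 0,0,-1,0] * (LinearMap.toMatrix b b Bi) := by
    intro Bi hBi
    have hcomp : BV.comp Bi LinearMap.id = BV.comp LinearMap.id Bi := by
      apply LinearMap.ext; intro u; apply LinearMap.ext; intro v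
      simpa [LinearMap.BilinForm.comp_apply] using hBi u v
    have h := congrArg (LinearMap.BilinForm.toMatrix b) hcomp
    rw [LinearMap.BilinForm.toMatrix_comp b b, LinearMap.BilinForm.toMatrix_comp b b] at h
    simpa [hGmat, LinearMap.toMatrix_id] using h
  set M₁ := LinearMap.toMatrix b b B₁ with hM₁def
  set M₂ := LinearMap.toMatrix b b B₂ with hM₂def
  have ht₁ : M₁.trace = 0 := by
    rw [hM₁def, ← LinearMap.trace_eq_matrix_trace ℂ b]; exact htr₁
  have ht₂ : M₂.trace = 0 := by
    rw [hM₂def, ← LinearMap.trace_eq_matrix_trace ℂ b]; exact htr₂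
  have hp₁ := param M₁ (hsa B₁ hB₁) ht₁
  have hp₂ := param M₂ (hsa B₂ hB₂) ht₂
  have hkey := keyP (M₁ 0 0) (M₁ 1 2) (M₁ 1 3) (M₁ 0 2) (M₁ 0 3)
    (M₂ 0 0) (M₂ 1 2) (M₂ 1 3) (M₂ 0 2) (M₂ 0 3) M₁ M₂ hp₁ hp₂
  set CL : Module.End ℂ V := B₁ * B₂ - B₂ * B₁ with hCLdef
  have hCLm : LinearMap.toMatrix b b (CL * CL) = (M₁*M₂ - M₂*M₁) * (M₁*M₂ - M₂*M₁) := by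
    rw [LinearMap.toMatrix_mul, hCLdef, _root_.map_sub, LinearMap.toMatrix_mul, LinearMap.toMatrix_mul,
      ← hM₁def, ← hM₂def]
  set c : ℂ := (LinearMap.trace ℂ V) (CL * CL) / 4 with hcdef
  have htrc : Matrix.trace ((M₁*M₂ - M₂*M₁) * (M₁*M₂ - M₂*M₁)) = (LinearMap.trace ℂ V) (CL * CL) := by
    rw [LinearMap.trace_eq_matrix_trace ℂ b, hCLm]
  have hC2 : CL * CL = c • 1 := by
    apply (LinearMap.toMatrix b b).injective
    rw [_root_.map_smul, LinearMap.toMatrix_one, hCLm, hkey, htrc]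
  have hij : i ∘ₗ j = -CL := eq_neg_of_add_eq_zero_right hADHM
  have hc : c = 0 := by
    by_contra hc
    have hsurj : Function.Surjective (CL * CL) := by
      intro v
      refine ⟨c⁻¹ • v, ?_⟩
      rw [hC2]
      simp only [LinearMap.smul_apply, Module.End.one_apply, smul_smul]
      rw [mul_inv_cancel₀ hc, one_smul]
    have htop : LinearMap.range (CL * CL) = ⊤ := LinearMap.range_eq_top.mpr hsurj
    have hle : LinearMap.range (CL * CL) ≤ LinearMap.range i := by
      have h1 : LinearMap.range (CL * CL) ≤ LinearMap.range CL := by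
        rw [Module.End.mul_eq_comp]
        exact LinearMap.range_comp_le_range _ _
      have h2 : LinearMap.range CL = LinearMap.range (i ∘ₗ j) := by
        have : CL = -(i ∘ₗ j) := by rw [hij, neg_neg]
        rw [this, LinearMap.range_neg]
      exact h1.trans (le_of_eq h2) |>.trans (LinearMap.range_comp_le_range _ _)
    rw [htop] at hle
    have h4 : Module.finrank ℂ ↥(LinearMap.range i) = 4 := by
      rw [top_le_iff.mp hle]
      rw [finrank_top, hV4]
    have h5 := LinearMap.finrank_range_le i
    rw [h4, hW2] at h5
    omega
  have goal1 : (i ∘ₗ j) ∘ₗ (i ∘ₗ j) = 0 := by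
    have h1 : (i ∘ₗ j) ∘ₗ (i ∘ₗ j) = CL * CL := by
      rw [hij, Module.End.mul_eq_comp, LinearMap.neg_comp, LinearMap.comp_neg, neg_neg]
    rw [h1, hC2, hc, zero_smul]
  refine ⟨goal1, ?_⟩
  -- the W side
  set X : Module.End ℂ W := j ∘ₗ i with hXdef
  have hXskew : ∀ w w' : W, BW (X w) w' = -(BW w (X w')) := by
    intro w w'
    calc BW (X w) w' = BW w' (j (i w)) := hWorth _ _
    _ = BV (i w') (i w) := hadj w' (i w)
    _ = -BV (i w) (i w') := hVsymp _ _
    _ = -BW w (j (i w')) := by rw [hadj]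
    _ = -(BW w (X w')) := rfl
  have htrX2 : LinearMap.trace ℂ W (X * X) = 0 := by
    have h1 : X * X = j ∘ₗ ((i ∘ₗ j) ∘ₗ i) := by
      rw [hXdef, Module.End.mul_eq_comp]
      rw [LinearMap.comp_assoc, LinearMap.comp_assoc]
    rw [h1, LinearMap.trace_comp_comm']
    have h2 : ((i ∘ₗ j) ∘ₗ i) ∘ₗ j = (i ∘ₗ j) ∘ₗ (i ∘ₗ j) := by
      rw [LinearMap.comp_assoc]
    rw [h2, goal1, _root_.map_zero]
  haveI : Invertible (2:ℂ) := invertibleOfNonzero two_ne_zero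
  have hWsymm : BW.IsSymm := ⟨fun x y => by simpa using (hWorth x y)⟩
  obtain ⟨w0, hw0⟩ := LinearMap.BilinForm.exists_orthogonal_basis (LinearMap.BilinForm.isSymm_iff.mp hWsymm)
  set w : Basis (Fin 2) ℂ W := w0.reindex (finCongr hW2) with hwdef
  have hwortho : ∀ k l : Fin 2, k ≠ l → BW (w k) (w l) = 0 := by
    intro k l hkl
    rw [hwdef, Module.Basis.reindex_apply, Module.Basis.reindex_apply]
    exact hw0 (fun h => hkl ((finCongr hW2).symm.injective h))
  have hwiio : BW.iIsOrtho ⇑w := by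
    rw [LinearMap.BilinForm.iIsOrtho_def]
    exact hwortho
  have hwne : ∀ k, BW (w k) (w k) ≠ 0 :=
    fun k => hwiio.not_isOrtho_basis_self_of_nondegenerate hWnd k
  set N := LinearMap.toMatrix w w X with hNdef
  have hXw : ∀ k : Fin 2, X (w k) = N 0 k • w 0 + N 1 k • w 1 := by
    intro k
    have h1 := Basis.sum_repr w (X (w k))
    rw [Fin.sum_univ_two] at h1
    rw [← h1, hNdef, LinearMap.toMatrix_apply, LinearMap.toMatrix_apply]
  have h01 : BW (w 0) (w 1) = 0 := hwortho 0 1 (by decide)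
  have h10 : BW (w 1) (w 0) = 0 := hwortho 1 0 (by decide)
  have hB0 : ∀ k, BW (X (w k)) (w 0) = N 0 k * BW (w 0) (w 0) := by
    intro k
    rw [hXw k]
    simp [_root_.map_add, _root_.map_smul, h10]
  have hB1 : ∀ k, BW (X (w k)) (w 1) = N 1 k * BW (w 1) (w 1) := by
    intro k
    rw [hXw k]
    simp [_root_.map_add, _root_.map_smul, h01]
  have hC0 : ∀ k, BW (w 0) (X (w k)) = N 0 k * BW (w 0) (w 0) := by
    intro k
    rw [hXw k]
    simp [_root_.map_add, _root_.map_smul, h01]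
  have hC1 : ∀ k, BW (w 1) (X (w k)) = N 1 k * BW (w 1) (w 1) := by
    intro k
    rw [hXw k]
    simp [_root_.map_add, _root_.map_smul, h10]
  have n00 : N 0 0 = 0 := by
    have hs := hXskew (w 0) (w 0)
    rw [hB0 0, hC0 0] at hs
    have : (2:ℂ) * (N 0 0 * BW (w 0) (w 0)) = 0 := by linear_combination hs
    have h2 := (mul_eq_zero.mp this).resolve_left two_ne_zero
    exact (mul_eq_zero.mp h2).resolve_right (hwne 0)
  have n11 : N 1 1 = 0 := by
    have hs := hXskew (w 1) (w 1)
    rw [hB1 1, hC1 1] at hs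
    have : (2:ℂ) * (N 1 1 * BW (w 1) (w 1)) = 0 := by linear_combination hs
    have h2 := (mul_eq_zero.mp this).resolve_left two_ne_zero
    exact (mul_eq_zero.mp h2).resolve_right (hwne 1)
  have s01 : N 0 1 * BW (w 0) (w 0) = -(N 1 0 * BW (w 1) (w 1)) := by
    have hs := hXskew (w 1) (w 0)
    rw [hB0 1, hC1 0] at hs
    linear_combination hs
  have htrN : (N * N).trace = 0 := by
    rw [hNdef, ← LinearMap.toMatrix_mul, ← LinearMap.trace_eq_matrix_trace ℂ w]
    exact htrX2
  have hprod : N 0 1 * N 1 0 = 0 := by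
    have : (N * N).trace = N 0 0 * N 0 0 + N 0 1 * N 1 0 + (N 1 0 * N 0 1 + N 1 1 * N 1 1) := by
      simp [Matrix.trace, Matrix.diag, Matrix.mul_apply, Fin.sum_univ_two]
    rw [this, n00, n11] at htrN
    have h2 : (2:ℂ) * (N 0 1 * N 1 0) = 0 := by linear_combination htrN
    exact (mul_eq_zero.mp h2).resolve_left two_ne_zero
  have n01 : N 0 1 = 0 := by
    have h1 : N 0 1 * N 0 1 * BW (w 0) (w 0) = 0 := by
      calc N 0 1 * N 0 1 * BW (w 0) (w 0) = N 0 1 * (N 0 1 * BW (w 0) (w 0)) := by ring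
      _ = N 0 1 * -(N 1 0 * BW (w 1) (w 1)) := by rw [s01]
      _ = -(N 0 1 * N 1 0) * BW (w 1) (w 1) := by ring
      _ = 0 := by rw [hprod]; ring
    have h2 := (mul_eq_zero.mp h1).resolve_right (hwne 0)
    exact mul_self_eq_zero.mp h2
  have n10 : N 1 0 = 0 := by
    have h1 : N 1 0 * BW (w 1) (w 1) = 0 := by
      have := s01
      rw [n01] at this
      linear_combination this
    exact (mul_eq_zero.mp h1).resolve_right (hwne 1)
  have hN0 : N = 0 := by
    ext k l
    fin_cases k <;> fin_cases l
    · simpa using n00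
    · simpa using n01
    · simpa using n10
    · simpa using n11
  apply (LinearMap.toMatrix w w).injective
  rw [_root_.map_zero, ← hNdef, hN0]
end

section
/- Let U be an ε-space (ε ∈ {−1,+1}) with form (·,·) and X an endomorphism of U; consider the bilinear form β on U defined by β(v,w) := (v, Xw). (1) If X is skew-adjoint, then β(w,v) = −ε·β(v,w) for all v,w ∈ U, the left kernel and the right kernel of β both equal ker X, and β descends to a nondegenerate bilinear form of type −ε on U/ker X ≅ Im X (this is the form |Xv, Xw| := (v, Xw) on Im X). (2) If X is self-adjoint, the same statements hold with −ε replaced by ε. -/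
lemma stmt12_aux
    (U : Type) [AddCommGroup U] [Module ℂ U] [FiniteDimensional ℂ U]
    (B : LinearMap.BilinForm ℂ U) (ε s c : ℂ)
    (hs : s ≠ 0) (hc : c = ε * s)
    (hnd : B.Nondegenerate)
    (hsymm : ∀ u v : U, B u v = ε * B v u)
    (X : Module.End ℂ U)
    (hadj : ∀ u v : U, B (X u) v = s * B u (X v)) :
      (∀ v w : U, B w (X v) = c * B v (X w)) ∧
      {v : U | ∀ w : U, B v (X w) = 0} = ↑(LinearMap.ker X) ∧
      {w : U | ∀ v : U, B v (X w) = 0} = ↑(LinearMap.ker X) ∧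
      ∃ γ : LinearMap.BilinForm ℂ ↥(LinearMap.range X),
        (∀ x y : ↥(LinearMap.range X), γ y x = c * γ x y) ∧
        γ.Nondegenerate ∧
        ∀ v w : U, γ ⟨X v, LinearMap.mem_range_self X v⟩
            ⟨X w, LinearMap.mem_range_self X w⟩ = B v (X w) := by
  have key : ∀ v w : U, B v (X w) = 0 ↔ B (X v) w = 0 := by
    intro v w
    rw [hadj]
    constructor
    · intro h; rw [h, mul_zero]
    · intro h; exact (mul_eq_zero.mp h).resolve_left hs
  have hbeta : ∀ v w : U, B w (X v) = c * B v (X w) := by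
    intro v w
    rw [hsymm w (X v), hadj, hc]
    ring
  refine ⟨hbeta, ?_, ?_, ?_⟩
  · ext v
    simp only [Set.mem_setOf_eq, SetLike.mem_coe, LinearMap.mem_ker]
    constructor
    · intro h
      apply hnd.1
      intro w
      exact (key v w).mp (h w)
    · intro h w
      rw [key, h, map_zero, LinearMap.zero_apply]
  · ext w
    simp only [Set.mem_setOf_eq, SetLike.mem_coe, LinearMap.mem_ker]
    constructor
    · intro h
      apply hnd.1
      intro v
      rw [hsymm, (by rw [h v, mul_zero] : ε * B v (X w) = ε * 0), mul_zero]
    · intro h v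
      rw [h, map_zero]
  · set φ : U →ₗ[ℂ] (↥(LinearMap.range X) →ₗ[ℂ] ℂ) :=
      B.compl₂ (LinearMap.range X).subtype with hφ
    have hker : LinearMap.ker X ≤ LinearMap.ker φ := by
      intro v hv
      rw [LinearMap.mem_ker] at hv ⊢
      ext y
      rcases y with ⟨y, w, rfl⟩
      simp only [hφ, LinearMap.compl₂_apply, Submodule.coe_subtype, LinearMap.zero_apply]
      rw [key, hv, map_zero, LinearMap.zero_apply]
    set e := X.quotKerEquivRange with he
    set γ : LinearMap.BilinForm ℂ ↥(LinearMap.range X) :=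
      ((LinearMap.ker X).liftQ φ hker).comp e.symm.toLinearMap with hγ
    have hesymm : ∀ v : U, e.symm ⟨X v, LinearMap.mem_range_self X v⟩
        = Submodule.Quotient.mk v := by
      intro v
      rw [LinearEquiv.symm_apply_eq]
      exact Subtype.ext (X.quotKerEquivRange_apply_mk v).symm
    have hkey : ∀ v w : U, γ ⟨X v, LinearMap.mem_range_self X v⟩
        ⟨X w, LinearMap.mem_range_self X w⟩ = B v (X w) := by
      intro v w
      simp only [hγ, LinearMap.comp_apply, LinearEquiv.coe_coe, hesymm,
        Submodule.liftQ_apply, hφ, LinearMap.compl₂_apply, Submodule.coe_subtype]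
    refine ⟨γ, ?_, ?_, hkey⟩
    · rintro ⟨x, v, rfl⟩ ⟨y, w, rfl⟩
      rw [hkey, hkey, hbeta]
    · refine ⟨?_, ?_⟩
      · rintro ⟨x, v, rfl⟩ hx
        have : ∀ w : U, B v (X w) = 0 := fun w => by
          have := hx ⟨X w, LinearMap.mem_range_self X w⟩
          rwa [hkey] at this
        have hXv : X v = 0 := by
          apply hnd.1
          intro w
          exact (key v w).mp (this w)
        exact Subtype.ext hXv
      · rintro ⟨y, w, rfl⟩ hy
        have : ∀ v : U, B w (X v) = 0 := fun v => by
          have := hy ⟨X v, LinearMap.mem_range_self X v⟩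
          rw [hkey] at this
          rw [hbeta, this, mul_zero]
        have hXw : X w = 0 := by
          apply hnd.1
          intro v
          exact (key w v).mp (this v)
        exact Subtype.ext hXw

/-- Let `U` be an ε-space with form `B`, `X` an endomorphism, and
`β (v, w) := B v (X w)`.
(1) If `X` is skew-adjoint, then `β` is (−ε)-symmetric, its left and right kernels both
equal `ker X`, and it descends to a nondegenerate (−ε)-symmetric form on `Im X`
(the form `|Xv, Xw| := B v (X w)`).
(2) If `X` is self-adjoint, the same holds with `−ε` replaced by `ε`. -/
theorem stmt12
    (U : Type) [AddCommGroup U] [Module ℂ U] [FiniteDimensional ℂ U]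
    (B : LinearMap.BilinForm ℂ U) (ε : ℂ)
    (hε : ε = 1 ∨ ε = -1)
    (hnd : B.Nondegenerate)
    (hsymm : ∀ u v : U, B u v = ε * B v u)
    (X : Module.End ℂ U) :
    ((∀ u v : U, B (X u) v = -B u (X v)) →
      (∀ v w : U, B w (X v) = -ε * B v (X w)) ∧
      {v : U | ∀ w : U, B v (X w) = 0} = ↑(LinearMap.ker X) ∧
      {w : U | ∀ v : U, B v (X w) = 0} = ↑(LinearMap.ker X) ∧
      ∃ γ : LinearMap.BilinForm ℂ ↥(LinearMap.range X),
        (∀ x y : ↥(LinearMap.range X), γ y x = -ε * γ x y) ∧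
        γ.Nondegenerate ∧
        ∀ v w : U, γ ⟨X v, LinearMap.mem_range_self X v⟩
            ⟨X w, LinearMap.mem_range_self X w⟩ = B v (X w)) ∧
    ((∀ u v : U, B (X u) v = B u (X v)) →
      (∀ v w : U, B w (X v) = ε * B v (X w)) ∧
      {v : U | ∀ w : U, B v (X w) = 0} = ↑(LinearMap.ker X) ∧
      {w : U | ∀ v : U, B v (X w) = 0} = ↑(LinearMap.ker X) ∧
      ∃ γ : LinearMap.BilinForm ℂ ↥(LinearMap.range X),
        (∀ x y : ↥(LinearMap.range X), γ y x = ε * γ x y) ∧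
        γ.Nondegenerate ∧
        ∀ v w : U, γ ⟨X v, LinearMap.mem_range_self X v⟩
            ⟨X w, LinearMap.mem_range_self X w⟩ = B v (X w)) := by
  constructor
  · intro h
    exact stmt12_aux U B ε (-1) (-ε) (by norm_num) (by ring) hnd hsymm X
      (fun u v => by rw [h u v]; ring)
  · intro h
    exact stmt12_aux U B ε 1 ε (by norm_num) (by ring) hnd hsymm X
      (fun u v => by rw [h u v]; ring)
end

section
/- Let V be a 4-dimensional symplectic ℂ-vector space and X a self-adjoint endomorphism of V. Then X has an eigenvalue a ∈ ℂ whose eigenspace has dimension at least 2, i.e. dim ker(X − a·id) ≥ 2. -/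
/-- Let `V` be a 4-dimensional symplectic ℂ-vector space and `X` a
self-adjoint endomorphism of `V`.  Then `X` has an eigenvalue whose eigenspace has
dimension at least 2. -/
theorem stmt13
    (V : Type) [AddCommGroup V] [Module ℂ V] [FiniteDimensional ℂ V]
    (BV : LinearMap.BilinForm ℂ V)
    (hVnd : BV.Nondegenerate)
    (hVsymp : ∀ u v : V, BV u v = -BV v u)
    (hV4 : Module.finrank ℂ V = 4)
    (X : Module.End ℂ V)
    (hX : ∀ u v : V, BV (X u) v = BV u (X v)) :
    ∃ a : ℂ, 2 ≤ Module.finrank ℂ ↥(Module.End.eigenspace X a) := by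
  have hrefl : BV.IsRefl := fun u v h => by rw [hVsymp v u, h, neg_zero]
  have hVnt : Nontrivial V := by
    apply Module.nontrivial_of_finrank_pos (R := ℂ); omega
  obtain ⟨a, ha⟩ := Module.End.exists_eigenvalue X
  refine ⟨a, ?_⟩
  by_contra hlt
  push_neg at hlt
  obtain ⟨u, hu⟩ := ha.exists_hasEigenvector
  have huE : u ∈ Module.End.eigenspace X a := hu.1
  have hune : u ≠ 0 := hu.2
  set N : Module.End ℂ V := X - a • 1 with hNdef
  -- self-adjointness of N and its powers
  have hN : ∀ v w : V, BV (N v) w = BV v (N w) := by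
    intro v w
    simp only [hNdef, LinearMap.sub_apply, LinearMap.smul_apply, Module.End.one_apply,
      map_sub, map_smul, LinearMap.sub_apply, LinearMap.smul_apply, hX]
  have hNpow : ∀ m : ℕ, ∀ v w : V, BV ((N ^ m) v) w = BV v ((N ^ m) w) := by
    intro m
    induction m with
    | zero => intro v w; simp
    | succ k ih =>
      intro v w
      have h1 : (N ^ (k + 1)) v = (N ^ k) (N v) := by
        rw [pow_succ]; rfl
      have h2 : (N ^ (k + 1)) w = N ((N ^ k) w) := by
        rw [pow_succ']; rfl
      rw [h1, h2, ih, hN]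
  -- skew vanishing
  have hskew : ∀ (m : ℕ) (w : V), BV ((N ^ m) w) w = 0 := by
    intro m w
    have h1 := hNpow m w w
    have h2 := hVsymp ((N ^ m) w) w
    linear_combination (h1 + h2) / 2
  -- eigenspace = ker N, and is spanned by u
  have hkerN : LinearMap.ker N = Module.End.eigenspace X a := by
    ext z
    simp only [LinearMap.mem_ker, Module.End.mem_eigenspace_iff, hNdef, LinearMap.sub_apply,
      LinearMap.smul_apply, Module.End.one_apply, sub_eq_zero]
  have hspan : Submodule.span ℂ {u} = LinearMap.ker N := by
    apply Submodule.eq_of_le_of_finrank_le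
    · rw [Submodule.span_le, Set.singleton_subset_iff, SetLike.mem_coe, hkerN]; exact huE
    · rw [hkerN, finrank_span_singleton hune]; omega
  -- the main induction
  have key : ∀ m : ℕ, ∀ z ∈ LinearMap.ker (N ^ m), BV u z = 0 := by
    intro m
    induction m with
    | zero =>
      intro z hz
      rw [LinearMap.mem_ker, pow_zero] at hz
      have hz0 : z = 0 := by simpa using hz
      rw [hz0]; simp
    | succ k ih =>
      -- first: u ∈ range (N ^ k)
      have hrange : u ∈ LinearMap.range (N ^ k) := by
        have hsub : LinearMap.range (N ^ k) ≤ BV.orthogonal (LinearMap.ker (N ^ k)) := by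
          rintro _ ⟨x, rfl⟩
          rw [LinearMap.BilinForm.mem_orthogonal_iff]
          intro z hz
          rw [LinearMap.mem_ker] at hz
          show BV z ((N ^ k) x) = 0
          rw [← hNpow k z x, hz]; simp
        have heq : LinearMap.range (N ^ k) = BV.orthogonal (LinearMap.ker (N ^ k)) := by
          apply Submodule.eq_of_le_of_finrank_le hsub
          rw [LinearMap.BilinForm.finrank_orthogonal hVnd]
          have := LinearMap.finrank_range_add_finrank_ker (N ^ k)
          omega
        rw [heq, LinearMap.BilinForm.mem_orthogonal_iff]
        intro z hz
        show BV z u = 0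
        rw [hVsymp, ih z hz, neg_zero]
      obtain ⟨w, hw⟩ := hrange
      intro z hz
      rw [LinearMap.mem_ker] at hz
      -- N^k z ∈ ker N = span u
      have h1 : (N ^ k) z ∈ LinearMap.ker N := by
        rw [LinearMap.mem_ker, ← Module.End.mul_apply, ← pow_succ']
        exact hz
      rw [← hspan, Submodule.mem_span_singleton] at h1
      obtain ⟨c, hc⟩ := h1
      have : BV u z = BV ((N ^ k) w) z := by rw [hw]
      rw [this, hNpow, ← hc, map_smul]
      have : BV w u = 0 := by rw [hVsymp, ← hw, hskew, neg_zero]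
      simp [this]
  -- Fitting: u ∈ range N^n and ker N^n for large n forces u = 0
  obtain ⟨n, hn⟩ := Filter.eventually_atTop.mp N.eventually_isCompl_ker_pow_range_pow
  have hcompl := hn (n + 1) (Nat.le_succ n)
  have huk : u ∈ LinearMap.ker (N ^ (n + 1)) := by
    rw [LinearMap.mem_ker, pow_succ]
    have hNu : N u = 0 := by
      rw [← LinearMap.mem_ker, hkerN]; exact huE
    show (N ^ n) (N u) = 0
    rw [hNu, map_zero]
  have hur : u ∈ LinearMap.range (N ^ (n + 1)) := by
    have hsub : LinearMap.range (N ^ (n + 1)) = BV.orthogonal (LinearMap.ker (N ^ (n + 1))) := by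
      apply Submodule.eq_of_le_of_finrank_le
      · rintro _ ⟨x, rfl⟩
        rw [LinearMap.BilinForm.mem_orthogonal_iff]
        intro z hz
        rw [LinearMap.mem_ker] at hz
        show BV z ((N ^ (n + 1)) x) = 0
        rw [← hNpow (n + 1) z x, hz]; simp
      · rw [LinearMap.BilinForm.finrank_orthogonal hVnd]
        have := LinearMap.finrank_range_add_finrank_ker (N ^ (n + 1))
        omega
    rw [hsub, LinearMap.BilinForm.mem_orthogonal_iff]
    intro z hz
    show BV z u = 0
    rw [hVsymp, key (n + 1) z hz, neg_zero]
  have : u = 0 := by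
    have := hcompl.disjoint
    exact (Submodule.disjoint_def.mp this) u huk hur
  exact hune this
end

section
/- Let V be a 4-dimensional symplectic ℂ-vector space and W a 3-dimensional orthogonal ℂ-vector space. Then the set {i ∈ Hom(W,V) : i ≠ 0, ii* = 0} is a single orbit under the action (g,h)·i = g ∘ i ∘ h⁻¹ of Sp(V) × O(W), where Sp(V) and O(W) are the groups of linear automorphisms of V and W preserving the respective forms: for any two nonzero i, i' ∈ Hom(W,V) with ii* = 0 and i'i'* = 0 there exist g ∈ Sp(V) and h ∈ O(W) with i' = g ∘ i ∘ h⁻¹. -/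
open Module

lemma exists_sqrt (c : ℂ) : ∃ s : ℂ, s * s = c := by
  obtain ⟨s, hs⟩ := IsAlgClosed.exists_pow_nat_eq c (n := 2) (by norm_num)
  exact ⟨s, by rw [← hs]; ring⟩

lemma hyp_basis {W : Type} [AddCommGroup W] [Module ℂ W] [FiniteDimensional ℂ W]
    (BW : LinearMap.BilinForm ℂ W) (hWnd : BW.Nondegenerate)
    (hWorth : ∀ u v : W, BW u v = BW v u) (hW3 : Module.finrank ℂ W = 3)
    (e : W) (he : e ≠ 0) (hee : BW e e = 0) :
    ∃ b : Basis (Fin 3) ℂ W, b 0 = e ∧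
      (BW (b 0) (b 0) = 0 ∧ BW (b 0) (b 1) = 1 ∧ BW (b 0) (b 2) = 0 ∧
       BW (b 1) (b 0) = 1 ∧ BW (b 1) (b 1) = 0 ∧ BW (b 1) (b 2) = 0 ∧
       BW (b 2) (b 0) = 0 ∧ BW (b 2) (b 1) = 0 ∧ BW (b 2) (b 2) = 1) := by
  have hy : ∃ y, BW e y ≠ 0 := by
    by_contra h; push_neg at h; exact he (hWnd.1 e h)
  obtain ⟨y, hy⟩ := hy
  set y1 := (BW e y)⁻¹ • y with hy1def
  have hey1 : BW e y1 = 1 := by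
    simp [hy1def, inv_mul_cancel₀ hy]
  have hy1e : BW y1 e = 1 := by rw [hWorth]; exact hey1
  set f := y1 - (BW y1 y1 / 2) • e with hfdef
  have hef : BW e f = 1 := by
    simp [hfdef, hey1, hee]
  have hfe : BW f e = 1 := by rw [hWorth]; exact hef
  have hff : BW f f = 0 := by
    simp only [hfdef, map_sub, map_smul, LinearMap.sub_apply, LinearMap.smul_apply,
      smul_eq_mul, hey1, hy1e, hee]
    ring
  set p : W → W := fun x => x - BW f x • e - BW e x • f with hpdef
  have hep : ∀ x, BW e (p x) = 0 := by
    intro x; simp [hpdef, hee, hef]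
  have hfp : ∀ x, BW f (p x) = 0 := by
    intro x; simp [hpdef, hfe, hff]
  have hpe : ∀ x, BW (p x) e = 0 := fun x => by rw [hWorth]; exact hep x
  have hpf : ∀ x, BW (p x) f = 0 := fun x => by rw [hWorth]; exact hfp x
  have hex : ∃ x, BW (p x) (p x) ≠ 0 := by
    by_contra hcon; push_neg at hcon
    have hpadd : ∀ x y, p (x + y) = p x + p y := by
      intro x y; simp only [hpdef, map_add, add_smul]; abel
    have hppz : ∀ x y, BW (p x) (p y) = 0 := by
      intro x y
      have h0 := hcon (x + y)
      rw [hpadd] at h0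
      simp only [map_add, LinearMap.add_apply] at h0
      rw [hcon x, hcon y, hWorth (p y) (p x)] at h0
      linear_combination h0 / 2
    have hpzero : ∀ x, p x = 0 := by
      intro x
      apply hWnd.1
      intro z
      have hdecomp : z = p z + BW f z • e + BW e z • f := by
        simp only [hpdef]; abel
      rw [hdecomp]
      simp [map_add, map_smul, hppz, hpe, hpf]
    have hinj : Function.Injective (LinearMap.prod (BW e) (BW f) : W →ₗ[ℂ] ℂ × ℂ) := by
      rw [← LinearMap.ker_eq_bot]
      rw [Submodule.eq_bot_iff]
      intro x hx
      rw [LinearMap.mem_ker, LinearMap.prod_apply] at hx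
      have h1 : BW e x = 0 := congrArg Prod.fst hx
      have h2 : BW f x = 0 := congrArg Prod.snd hx
      have := hpzero x
      simp only [hpdef, h1, h2, zero_smul, sub_zero] at this
      exact this
    have hle := LinearMap.finrank_le_finrank_of_injective hinj
    rw [hW3] at hle
    simp [Module.finrank_prod] at hle
  obtain ⟨x0, hx0⟩ := hex
  obtain ⟨s, hs⟩ := exists_sqrt (BW (p x0) (p x0))
  have hsne : s ≠ 0 := by
    intro h; rw [h, mul_zero] at hs; exact hx0 hs.symm
  set z := s⁻¹ • p x0 with hzdef
  have hez : BW e z = 0 := by simp [hzdef, hep]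
  have hfz : BW f z = 0 := by simp [hzdef, hfp]
  have hze : BW z e = 0 := by rw [hWorth]; exact hez
  have hzf : BW z f = 0 := by rw [hWorth]; exact hfz
  have hzz : BW z z = 1 := by
    simp only [hzdef, map_smul, LinearMap.smul_apply, smul_eq_mul]
    rw [← hs]
    field_simp
  have hli : LinearIndependent ℂ ![e, f, z] := by
    rw [Fintype.linearIndependent_iff]
    intro g hg
    rw [Fin.sum_univ_three] at hg
    simp only [Matrix.cons_val_zero, Matrix.cons_val_one, Matrix.head_cons,
      Matrix.cons_val_two, Matrix.tail_cons] at hg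
    have h0 : g 0 = 0 := by
      have h := congrArg (BW f) hg
      simpa [map_add, map_smul, hfe, hff, hfz] using h
    have h1 : g 1 = 0 := by
      have h := congrArg (BW e) hg
      simpa [map_add, map_smul, hee, hef, hez] using h
    have h2 : g 2 = 0 := by
      have h := congrArg (BW z) hg
      simpa [map_add, map_smul, hze, hzf, hzz] using h
    intro ii; fin_cases ii <;> assumption
  have hcard : Fintype.card (Fin 3) = Module.finrank ℂ W := by simp [hW3]
  refine ⟨basisOfLinearIndependentOfCardEqFinrank hli hcard, ?_, ?_, ?_, ?_, ?_, ?_, ?_, ?_, ?_, ?_⟩ <;>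
    simp [coe_basisOfLinearIndependentOfCardEqFinrank, hee, hef, hfe, hff, hez, hfz, hze, hzf, hzz]
lemma collinear3 {W : Type} [AddCommGroup W] [Module ℂ W] [FiniteDimensional ℂ W]
    (BW : LinearMap.BilinForm ℂ W) (hWnd : BW.Nondegenerate)
    (hWorth : ∀ u v : W, BW u v = BW v u) (hW3 : Module.finrank ℂ W = 3)
    (a c : W) (ha : a ≠ 0) (haa : BW a a = 0) (hac : BW a c = 0) (hcc : BW c c = 0) :
    ∃ t : ℂ, c = t • a := by
  obtain ⟨b, hb0, g00, g01, g02, g10, g11, g12, g20, g21, g22⟩ :=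
    hyp_basis BW hWnd hWorth hW3 a ha haa
  have hrepr : c = b.repr c 0 • b 0 + b.repr c 1 • b 1 + b.repr c 2 • b 2 := by
    have h := b.sum_repr c
    rw [Fin.sum_univ_three] at h
    exact h.symm
  have e1 : b.repr c 1 = 0 := by
    have h : BW (b 0) c = 0 := by rw [hb0]; exact hac
    rw [hrepr] at h
    simpa [map_add, map_smul, g00, g01, g02] using h
  have e2 : b.repr c 2 = 0 := by
    have h := hcc
    rw [hrepr] at h
    simp only [map_add, map_smul, LinearMap.add_apply, LinearMap.smul_apply, smul_eq_mul,
      g00, g01, g02, g10, g11, g12, g20, g21, g22, e1] at h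
    have : b.repr c 2 * b.repr c 2 = 0 := by linear_combination h
    exact mul_self_eq_zero.mp this
  refine ⟨b.repr c 0, ?_⟩
  conv_lhs => rw [hrepr]
  rw [e1, e2, hb0]
  simp

lemma orth_trans {W : Type} [AddCommGroup W] [Module ℂ W] [FiniteDimensional ℂ W]
    (BW : LinearMap.BilinForm ℂ W) (hWnd : BW.Nondegenerate)
    (hWorth : ∀ u v : W, BW u v = BW v u) (hW3 : Module.finrank ℂ W = 3)
    (e e' : W) (he : e ≠ 0) (he' : e' ≠ 0) (hee : BW e e = 0) (hee' : BW e' e' = 0) :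
    ∃ h : W ≃ₗ[ℂ] W, (∀ u v, BW (h u) (h v) = BW u v) ∧ h e = e' := by
  obtain ⟨b, hb0, g00, g01, g02, g10, g11, g12, g20, g21, g22⟩ :=
    hyp_basis BW hWnd hWorth hW3 e he hee
  obtain ⟨b', hb0', g00', g01', g02', g10', g11', g12', g20', g21', g22'⟩ :=
    hyp_basis BW hWnd hWorth hW3 e' he' hee'
  set h := b.equiv b' (Equiv.refl _) with hh
  have happ : ∀ ii, h (b ii) = b' ii := fun ii => by
    simp [hh, Basis.equiv_apply]
  have key : BW.compl₁₂ (h : W →ₗ[ℂ] W) (h : W →ₗ[ℂ] W) = BW := by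
    apply LinearMap.ext_basis b b
    intro ii jj
    rw [LinearMap.compl₁₂_apply]
    simp only [LinearEquiv.coe_coe]
    rw [happ ii, happ jj]
    fin_cases ii <;> fin_cases jj <;> simp_all
  refine ⟨h, ?_, ?_⟩
  · intro u v
    have hk := congrArg (fun F : W →ₗ[ℂ] W →ₗ[ℂ] ℂ => F u v) key
    simpa [LinearMap.compl₁₂_apply] using hk
  · rw [← hb0, happ 0, hb0']
lemma rank_one {V W : Type} [AddCommGroup V] [Module ℂ V] [FiniteDimensional ℂ V]
    [AddCommGroup W] [Module ℂ W] [FiniteDimensional ℂ W]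
    (BV : LinearMap.BilinForm ℂ V) (BW : LinearMap.BilinForm ℂ W)
    (hVnd : BV.Nondegenerate) (hWnd : BW.Nondegenerate)
    (hWorth : ∀ u v : W, BW u v = BW v u)
    (hW3 : Module.finrank ℂ W = 3)
    (i : W →ₗ[ℂ] V) (j : V →ₗ[ℂ] W)
    (hadj : ∀ (w : W) (v : V), BW w (j v) = BV (i w) v)
    (hi : i ≠ 0) (hij : i ∘ₗ j = 0) :
    ∃ (v : V) (w₀ : W), v ≠ 0 ∧ w₀ ≠ 0 ∧ BW w₀ w₀ = 0 ∧ ∀ w, i w = BW w₀ w • v := by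
  have hkey : ∀ x y : V, BW (j x) (j y) = 0 := by
    intro x y
    rw [hadj (j x) y]
    have hz : i (j x) = 0 := by
      have h := LinearMap.congr_fun hij x
      simpa using h
    rw [hz]
    simp
  have hjx : ∃ x, j x ≠ 0 := by
    by_contra hcon; push_neg at hcon
    apply hi
    ext w
    simp only [LinearMap.zero_apply]
    apply hVnd.1 (i w)
    intro x
    rw [← hadj, hcon]
    simp
  obtain ⟨x₁, hx₁⟩ := hjx
  set w₀ := j x₁ with hw₀def
  have hw₀iso : BW w₀ w₀ = 0 := hkey x₁ x₁
  have hspan : ∀ x, ∃ t : ℂ, j x = t • w₀ := fun x =>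
    collinear3 BW hWnd hWorth hW3 w₀ (j x) hx₁ hw₀iso (hkey x₁ x) (hkey x x)
  have hu : ∃ u, BW w₀ u ≠ 0 := by
    by_contra hcon; push_neg at hcon; exact hx₁ (hWnd.1 w₀ hcon)
  obtain ⟨u, hu⟩ := hu
  have hu' : BW u w₀ ≠ 0 := by rw [hWorth]; exact hu
  set u₀ := (BW u w₀)⁻¹ • u with hu₀def
  have hu₀ : BW u₀ w₀ = 1 := by
    rw [hu₀def, map_smul]
    simp [inv_mul_cancel₀ hu']
  set v := i u₀ with hvdef
  have hjv : ∀ x, j x = BV v x • w₀ := by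
    intro x
    obtain ⟨t, ht⟩ := hspan x
    have hvt : BV v x = t := by
      rw [hvdef, ← hadj, ht, map_smul]
      simp [hu₀]
    rw [ht, hvt]
  have hvne : v ≠ 0 := by
    intro hv0
    apply hx₁
    have h := hjv x₁
    rw [hv0] at h
    simpa using h
  refine ⟨v, w₀, hvne, hx₁, hw₀iso, ?_⟩
  intro w
  have hsub : ∀ x, BV (i w - BW w₀ w • v) x = 0 := by
    intro x
    have h1 : BV (i w) x = BV v x * BW w w₀ := by
      rw [← hadj, hjv x, map_smul]
      simp
    simp only [map_sub, map_smul, LinearMap.sub_apply, LinearMap.smul_apply, smul_eq_mul]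
    rw [h1, hWorth w₀ w]
    ring
  have h := hVnd.1 _ hsub
  exact sub_eq_zero.mp h

lemma symp_transvection {V : Type} [AddCommGroup V] [Module ℂ V]
    (BV : LinearMap.BilinForm ℂ V) (hVsymp : ∀ u v : V, BV u v = -BV v u)
    (u : V) (c : ℂ) :
    ∃ g : V ≃ₗ[ℂ] V, (∀ a b, BV (g a) (g b) = BV a b) ∧ ∀ x, g x = x + (c * BV x u) • u := by
  have halt : ∀ x, BV x x = 0 := by
    intro x
    have h := hVsymp x x
    have h2 : BV x x + BV x x = 0 := by linear_combination h
    exact add_self_eq_zero.mp h2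
  let T : ℂ → (V →ₗ[ℂ] V) := fun c' => LinearMap.id + c' • (BV.flip u).smulRight u
  have hT : ∀ c' x, T c' x = x + (c' * BV x u) • u := by
    intro c' x
    simp [T, LinearMap.smulRight_apply, LinearMap.flip_apply, smul_smul]
  have hBu : ∀ c' x, BV (T c' x) u = BV x u := by
    intro c' x
    rw [hT]
    simp only [map_add, map_smul, LinearMap.add_apply, LinearMap.smul_apply, smul_eq_mul, halt u]
    ring
  have hcomp : ∀ c₁ c₂ x, T c₁ (T c₂ x) = x + ((c₁ + c₂) * BV x u) • u := by
    intro c₁ c₂ x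
    rw [hT, hBu, hT]
    module
  refine ⟨LinearEquiv.ofLinear (T c) (T (-c)) ?_ ?_, ?_, ?_⟩
  · ext x
    simp [LinearMap.comp_apply, hcomp]
  · ext x
    simp [LinearMap.comp_apply, hcomp]
  · intro a b
    simp only [LinearEquiv.ofLinear_apply]
    rw [hT, hT]
    simp only [map_add, map_smul, LinearMap.add_apply, LinearMap.smul_apply, smul_eq_mul]
    have h1 := hVsymp u b
    have h2 := halt u
    linear_combination (c * BV a u) * h1 + ((c * BV a u) * (c * BV b u)) * h2
  · intro x
    simp only [LinearEquiv.ofLinear_apply]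
    exact hT c x

lemma sp_step {V : Type} [AddCommGroup V] [Module ℂ V]
    (BV : LinearMap.BilinForm ℂ V) (hVsymp : ∀ u v : V, BV u v = -BV v u)
    (v v' : V) (hvv' : BV v v' ≠ 0) :
    ∃ g : V ≃ₗ[ℂ] V, (∀ a b, BV (g a) (g b) = BV a b) ∧ g v = v' := by
  have halt : BV v v = 0 := by
    have h := hVsymp v v
    have h2 : BV v v + BV v v = 0 := by linear_combination h
    exact add_self_eq_zero.mp h2
  obtain ⟨g, hiso, happ⟩ := symp_transvection BV hVsymp (v' - v) (BV v v')⁻¹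
  refine ⟨g, hiso, ?_⟩
  rw [happ v]
  have h1 : BV v (v' - v) = BV v v' := by
    rw [map_sub, halt, sub_zero]
  rw [h1, inv_mul_cancel₀ hvv', one_smul]
  abel

lemma sp_trans {V : Type} [AddCommGroup V] [Module ℂ V] [FiniteDimensional ℂ V]
    (BV : LinearMap.BilinForm ℂ V) (hVnd : BV.Nondegenerate)
    (hVsymp : ∀ u v : V, BV u v = -BV v u)
    (v v' : V) (hv : v ≠ 0) (hv' : v' ≠ 0) :
    ∃ g : V ≃ₗ[ℂ] V, (∀ a b, BV (g a) (g b) = BV a b) ∧ g v = v' := by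
  have hex : ∀ x : V, x ≠ 0 → ∃ y, BV x y ≠ 0 := by
    intro x hx; by_contra hcon; push_neg at hcon; exact hx (hVnd.1 x hcon)
  by_cases hd : BV v v' ≠ 0
  · exact sp_step BV hVsymp v v' hd
  push_neg at hd
  obtain ⟨a, ha⟩ := hex v hv
  obtain ⟨bb, hb⟩ := hex v' hv'
  have hw : ∃ w, BV v w ≠ 0 ∧ BV v' w ≠ 0 := by
    by_cases h1 : BV v' a ≠ 0
    · exact ⟨a, ha, h1⟩
    by_cases h2 : BV v bb ≠ 0
    · exact ⟨bb, h2, hb⟩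
    push_neg at h1 h2
    refine ⟨a + bb, ?_, ?_⟩
    · rw [map_add, h2, add_zero]; exact ha
    · rw [map_add, h1, zero_add]; exact hb
  obtain ⟨w, hw1, hw2⟩ := hw
  have hw2' : BV w v' ≠ 0 := by
    rw [hVsymp]
    simpa using hw2
  obtain ⟨g1, hg1iso, hg1⟩ := sp_step BV hVsymp v w hw1
  obtain ⟨g2, hg2iso, hg2⟩ := sp_step BV hVsymp w v' hw2'
  refine ⟨g1.trans g2, fun a b => ?_, ?_⟩
  · simp only [LinearEquiv.trans_apply]
    rw [hg2iso, hg1iso]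
  · simp only [LinearEquiv.trans_apply]
    rw [hg1, hg2]

/-- Let `V` be a 4-dimensional symplectic ℂ-vector space and `W` a
3-dimensional orthogonal ℂ-vector space.  The set `{i ∈ Hom(W,V) : i ≠ 0, i i* = 0}`
is a single orbit of `Sp(V) × O(W)` acting by `(g,h)·i = g ∘ i ∘ h⁻¹`. -/
theorem stmt16
    (V W : Type) [AddCommGroup V] [Module ℂ V] [FiniteDimensional ℂ V]
    [AddCommGroup W] [Module ℂ W] [FiniteDimensional ℂ W]
    (BV : LinearMap.BilinForm ℂ V) (BW : LinearMap.BilinForm ℂ W)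
    (hVnd : BV.Nondegenerate) (hWnd : BW.Nondegenerate)
    (hVsymp : ∀ u v : V, BV u v = -BV v u)
    (hWorth : ∀ u v : W, BW u v = BW v u)
    (hV4 : Module.finrank ℂ V = 4) (hW3 : Module.finrank ℂ W = 3)
    (i i' : W →ₗ[ℂ] V) (j j' : V →ₗ[ℂ] W)
    (hadj : ∀ (w : W) (v : V), BW w (j v) = BV (i w) v)
    (hadj' : ∀ (w : W) (v : V), BW w (j' v) = BV (i' w) v)
    (hi : i ≠ 0) (hi' : i' ≠ 0)
    (hij : i ∘ₗ j = 0) (hij' : i' ∘ₗ j' = 0) :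
    ∃ (g : V ≃ₗ[ℂ] V) (h : W ≃ₗ[ℂ] W),
      (∀ u v : V, BV (g u) (g v) = BV u v) ∧
      (∀ u v : W, BW (h u) (h v) = BW u v) ∧
      ∀ w : W, i' w = g (i (h.symm w)) := by
  obtain ⟨v, w₀, hv, hw₀, hw₀iso, hiw⟩ :=
    rank_one BV BW hVnd hWnd hWorth hW3 i j hadj hi hij
  obtain ⟨v', w₀', hv', hw₀', hw₀iso', hiw'⟩ :=
    rank_one BV BW hVnd hWnd hWorth hW3 i' j' hadj' hi' hij'
  obtain ⟨g, hgiso, hgv⟩ := sp_trans BV hVnd hVsymp v v' hv hv'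
  obtain ⟨h, hhiso, hhw⟩ := orth_trans BW hWnd hWorth hW3 w₀ w₀' hw₀ hw₀' hw₀iso hw₀iso'
  refine ⟨g, h, hgiso, hhiso, ?_⟩
  intro w
  rw [hiw' w, hiw (h.symm w), map_smul, hgv]
  congr 1
  rw [← hhiso w₀ (h.symm w), hhw, h.apply_symm_apply]
end

section
/- Let V be a 4-dimensional symplectic ℂ-vector space and let 𝔭' denote the space of trace-free self-adjoint endomorphisms of V. For B₁, B₂ ∈ 𝔭', one has [B₁,B₂] = 0 if and only if B₁ and B₂ are proportional, i.e. there exist B ∈ 𝔭' and a, b ∈ ℂ with B₁ = aB and B₂ = bB. In other words, {(B₁,B₂) ∈ 𝔭' × 𝔭' : [B₁,B₂] = 0} = {(aB, bB) : a,b ∈ ℂ, B ∈ 𝔭'}. -/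
set_option maxHeartbeats 1600000

/-- Let `V` be a 4-dimensional symplectic ℂ-vector space and let `𝔭'`
be the trace-free self-adjoint endomorphisms.  For `B₁, B₂ ∈ 𝔭'`, `[B₁,B₂] = 0` iff
`B₁` and `B₂` are proportional: `B₁ = a • B`, `B₂ = b • B` for some `B ∈ 𝔭'`, `a b : ℂ`. -/
theorem stmt17
    (V : Type) [AddCommGroup V] [Module ℂ V] [FiniteDimensional ℂ V]
    (BV : LinearMap.BilinForm ℂ V)
    (hVnd : BV.Nondegenerate)
    (hVsymp : ∀ u v : V, BV u v = -BV v u)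
    (hV4 : Module.finrank ℂ V = 4)
    (B₁ B₂ : Module.End ℂ V)
    (hB₁ : ∀ u v : V, BV (B₁ u) v = BV u (B₁ v))
    (hB₂ : ∀ u v : V, BV (B₂ u) v = BV u (B₂ v))
    (htr₁ : LinearMap.trace ℂ V B₁ = 0) (htr₂ : LinearMap.trace ℂ V B₂ = 0) :
    B₁ * B₂ = B₂ * B₁ ↔
      ∃ (B : Module.End ℂ V) (a b : ℂ),
        (∀ u v : V, BV (B u) v = BV u (B v)) ∧ LinearMap.trace ℂ V B = 0 ∧
          B₁ = a • B ∧ B₂ = b • B := by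
  classical
  constructor
  · intro hcomm
    -- the form is alternating
    have halt : ∀ x : V, BV x x = 0 := fun x => by linear_combination (hVsymp x x) / 2
    have hnd : ∀ x : V, x ≠ 0 → ∃ y, BV x y ≠ 0 := by
      intro x hx
      by_contra h
      push_neg at h
      exact hx (hVnd.1 x h)
    -- construct a Darboux basis e0 e1 e2 e3
    have : Nontrivial V := Module.finrank_pos_iff.mp (by rw [hV4]; norm_num)
    obtain ⟨e0, he0⟩ := exists_ne (0 : V)
    obtain ⟨u1, hu1⟩ := hnd e0 he0
    set e1 : V := (BV e0 u1)⁻¹ • u1 with he1def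
    have g01 : BV e0 e1 = 1 := by
      rw [he1def, map_smul, smul_eq_mul, inv_mul_cancel₀ hu1]
    have g10 : BV e1 e0 = -1 := by rw [hVsymp, g01]
    set ψ : V →ₗ[ℂ] ℂ × ℂ := LinearMap.prod (BV e0) (BV e1) with hψdef
    have hker : 0 < Module.finrank ℂ (LinearMap.ker ψ) := by
      have h1 := LinearMap.finrank_range_add_finrank_ker ψ
      have h2 : Module.finrank ℂ (LinearMap.range ψ) ≤ Module.finrank ℂ (ℂ × ℂ) :=
        Submodule.finrank_le _
      have h3 : Module.finrank ℂ (ℂ × ℂ) = 2 := by simp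
      rw [hV4] at h1
      omega
    obtain ⟨x2, hx2ne⟩ := Module.finrank_pos_iff_exists_ne_zero.mp hker
    set e2 : V := (x2 : V) with he2def
    have he2 : e2 ≠ 0 := fun h => hx2ne (Subtype.ext h)
    have hx2ker : ψ e2 = 0 := x2.2
    have g02 : BV e0 e2 = 0 := by
      have := congrArg Prod.fst hx2ker
      simpa [hψdef] using this
    have g12 : BV e1 e2 = 0 := by
      have := congrArg Prod.snd hx2ker
      simpa [hψdef] using this
    have g20 : BV e2 e0 = 0 := by rw [hVsymp, g02, neg_zero]
    have g21 : BV e2 e1 = 0 := by rw [hVsymp, g12, neg_zero]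
    obtain ⟨y, hy⟩ := hnd e2 he2
    set e3' : V := y + (BV e1 y) • e0 - (BV e0 y) • e1 with he3'def
    have h03' : BV e0 e3' = 0 := by
      rw [he3'def]
      simp only [map_sub, map_add, map_smul, smul_eq_mul]
      rw [halt, g01]; ring
    have h13' : BV e1 e3' = 0 := by
      rw [he3'def]
      simp only [map_sub, map_add, map_smul, smul_eq_mul]
      rw [halt, g10]; ring
    have h23' : BV e2 e3' = BV e2 y := by
      rw [he3'def]
      simp only [map_sub, map_add, map_smul, smul_eq_mul]
      rw [g20, g21]; ring
    have h23'ne : BV e2 e3' ≠ 0 := by rw [h23']; exact hy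
    set e3 : V := (BV e2 e3')⁻¹ • e3' with he3def
    have g23 : BV e2 e3 = 1 := by
      rw [he3def, map_smul, smul_eq_mul, inv_mul_cancel₀ h23'ne]
    have g03 : BV e0 e3 = 0 := by rw [he3def, map_smul, smul_eq_mul, h03', mul_zero]
    have g13 : BV e1 e3 = 0 := by rw [he3def, map_smul, smul_eq_mul, h13', mul_zero]
    have g30 : BV e3 e0 = 0 := by rw [hVsymp, g03, neg_zero]
    have g31 : BV e3 e1 = 0 := by rw [hVsymp, g13, neg_zero]
    have g32 : BV e3 e2 = -1 := by rw [hVsymp, g23]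
    -- the basis
    have hli : LinearIndependent ℂ ![e0, e1, e2, e3] := by
      rw [Fintype.linearIndependent_iff]
      intro g hg
      rw [Fin.sum_univ_four] at hg
      simp only [Matrix.cons_val_zero, Matrix.cons_val_one, Matrix.head_cons,
        Matrix.cons_val_two, Matrix.tail_cons, Matrix.cons_val_three] at hg
      have c0 : g 0 = 0 := by
        have h := congrArg (fun z => BV z e1) hg
        simpa [map_add, map_smul, smul_eq_mul, g01, halt, g21, g31] using h
      have c1 : g 1 = 0 := by
        have h := congrArg (fun z => BV z e0) hg
        simpa [map_add, map_smul, smul_eq_mul, g10, halt, g20, g30] using h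
      have c2 : g 2 = 0 := by
        have h := congrArg (fun z => BV z e3) hg
        simpa [map_add, map_smul, smul_eq_mul, g03, g13, g23, halt] using h
      have c3 : g 3 = 0 := by
        have h := congrArg (fun z => BV z e2) hg
        simpa [map_add, map_smul, smul_eq_mul, g02, g12, g32, halt] using h
      intro i
      fin_cases i <;> assumption
    have hb4 : Fintype.card (Fin 4) = Module.finrank ℂ V := by rw [hV4]; simp
    set bb : Module.Basis (Fin 4) ℂ V := basisOfLinearIndependentOfCardEqFinrank hli hb4 with hbbdef
    have hbb0 : bb 0 = e0 := by rw [hbbdef, coe_basisOfLinearIndependentOfCardEqFinrank]; rfl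
    have hbb1 : bb 1 = e1 := by rw [hbbdef, coe_basisOfLinearIndependentOfCardEqFinrank]; rfl
    have hbb2 : bb 2 = e2 := by rw [hbbdef, coe_basisOfLinearIndependentOfCardEqFinrank]; rfl
    have hbb3 : bb 3 = e3 := by rw [hbbdef, coe_basisOfLinearIndependentOfCardEqFinrank]; rfl
    have hrepr : ∀ x : V,
        bb.repr x 0 • e0 + bb.repr x 1 • e1 + bb.repr x 2 • e2 + bb.repr x 3 • e3 = x := by
      intro x
      have h := bb.sum_repr x
      rwa [Fin.sum_univ_four, hbb0, hbb1, hbb2, hbb3] at h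
    have r0 : ∀ x : V, bb.repr x 0 = BV x e1 := by
      intro x
      conv_rhs => rw [← hrepr x]
      simp [map_add, map_smul, smul_eq_mul, LinearMap.add_apply, LinearMap.smul_apply,
        g01, g21, g31, halt]
    have r1 : ∀ x : V, bb.repr x 1 = -BV x e0 := by
      intro x
      conv_rhs => rw [← hrepr x]
      simp [map_add, map_smul, smul_eq_mul, LinearMap.add_apply, LinearMap.smul_apply,
        g10, g20, g30, halt]
    have r2 : ∀ x : V, bb.repr x 2 = BV x e3 := by
      intro x
      conv_rhs => rw [← hrepr x]
      simp [map_add, map_smul, smul_eq_mul, LinearMap.add_apply, LinearMap.smul_apply,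
        g03, g13, g23, halt]
    have r3 : ∀ x : V, bb.repr x 3 = -BV x e2 := by
      intro x
      conv_rhs => rw [← hrepr x]
      simp [map_add, map_smul, smul_eq_mul, LinearMap.add_apply, LinearMap.smul_apply,
        g02, g12, g32, halt]
    -- the matrix of a trace-free self-adjoint endomorphism
    have key : ∀ B : Module.End ℂ V, (∀ u v : V, BV (B u) v = BV u (B v)) →
        LinearMap.trace ℂ V B = 0 →
        LinearMap.toMatrix bb bb B =
          !![BV (B e0) e1, 0, -BV (B e1) e2, -BV (B e1) e3;
             0, BV (B e0) e1, BV (B e0) e2, BV (B e0) e3;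
             BV (B e0) e3, BV (B e1) e3, -BV (B e0) e1, 0;
             -BV (B e0) e2, -BV (B e1) e2, 0, -BV (B e0) e1] := by
      intro B hB htrB
      have nskew : ∀ x y : V, BV (B x) y = -BV (B y) x := fun x y => by
        rw [hB x y, hVsymp]
      have ndiag : ∀ x : V, BV (B x) x = 0 := fun x => by
        linear_combination (nskew x x) / 2
      have htrB' : Matrix.trace (LinearMap.toMatrix bb bb B) = 0 :=
        (LinearMap.trace_eq_matrix_trace ℂ bb B).symm.trans htrB
      rw [Matrix.trace, Fin.sum_univ_four] at htrB'
      simp only [Matrix.diag_apply, LinearMap.toMatrix_apply, hbb0, hbb1, hbb2, hbb3,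
        r0, r1, r2, r3] at htrB'
      have htrc : BV (B e2) e3 = -BV (B e0) e1 := by
        linear_combination htrB' / 2 + (nskew e1 e0) / 2 + (nskew e3 e2) / 2
      ext i j
      fin_cases i <;> fin_cases j <;>
        simp [LinearMap.toMatrix_apply, hbb0, hbb1, hbb2, hbb3, r0, r1, r2, r3, ndiag, htrc,
          nskew e1 e0, nskew e2 e0, nskew e2 e1, nskew e3 e0, nskew e3 e1, nskew e3 e2]
    have hP := key B₁ hB₁ htr₁
    have hQ := key B₂ hB₂ htr₂
    set s : ℂ := BV (B₁ e0) e1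
    set t : ℂ := BV (B₁ e0) e2
    set u : ℂ := BV (B₁ e0) e3
    set v : ℂ := BV (B₁ e1) e2
    set w : ℂ := BV (B₁ e1) e3
    set s' : ℂ := BV (B₂ e0) e1
    set t' : ℂ := BV (B₂ e0) e2
    set u' : ℂ := BV (B₂ e0) e3
    set v' : ℂ := BV (B₂ e1) e2
    set w' : ℂ := BV (B₂ e1) e3
    have hMQ : (!![s, 0, -v, -w; 0, s, t, u; u, w, -s, 0; -t, -v, 0, -s] *
          !![s', 0, -v', -w'; 0, s', t', u'; u', w', -s', 0; -t', -v', 0, -s'] : Matrix (Fin 4) (Fin 4) ℂ) =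
        !![s', 0, -v', -w'; 0, s', t', u'; u', w', -s', 0; -t', -v', 0, -s'] *
          !![s, 0, -v, -w; 0, s, t, u; u, w, -s, 0; -t, -v, 0, -s] := by
      rw [← hP, ← hQ, ← LinearMap.toMatrix_mul, ← LinearMap.toMatrix_mul, hcomm]
    have entry : ∀ i j : Fin 4,
        (!![s, 0, -v, -w; 0, s, t, u; u, w, -s, 0; -t, -v, 0, -s] *
          !![s', 0, -v', -w'; 0, s', t', u'; u', w', -s', 0; -t', -v', 0, -s'] : Matrix (Fin 4) (Fin 4) ℂ) i j =
        (!![s', 0, -v', -w'; 0, s', t', u'; u', w', -s', 0; -t', -v', 0, -s'] *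
          !![s, 0, -v, -w; 0, s, t, u; u, w, -s, 0; -t, -v, 0, -s]) i j := fun i j => by
      rw [hMQ]
    have h12 := entry 1 2
    have h13 := entry 1 3
    have h02 := entry 0 2
    have h03 := entry 0 3
    have h10 := entry 1 0
    have h01 := entry 0 1
    have h23 := entry 2 3
    have h32 := entry 3 2
    have h00 := entry 0 0
    have h22 := entry 2 2
    simp [Matrix.mul_apply, Fin.sum_univ_four]
      at h12 h13 h02 h03 h10 h01 h23 h32 h00 h22
    have A_st : s * t' = t * s' := by first
        | linear_combination h12 / 2
        | linear_combination -(h12 / 2)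
    have A_su : s * u' = u * s' := by first
        | linear_combination h13 / 2
        | linear_combination -(h13 / 2)
    have A_sv : s * v' = v * s' := by first
        | linear_combination -h02 / 2
        | linear_combination -(-h02 / 2)
    have A_sw : s * w' = w * s' := by first
        | linear_combination -h03 / 2
        | linear_combination -(-h03 / 2)
    have A_tu : t * u' = u * t' := by first
        | linear_combination -h10 / 2
        | linear_combination -(-h10 / 2)
    have A_vw : v * w' = w * v' := by first
        | linear_combination -h01 / 2
        | linear_combination -(-h01 / 2)
    have A_uw : u * w' = w * u' := by first
        | linear_combination h23 / 2
        | linear_combination -(h23 / 2)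
    have A_tv : t * v' = v * t' := by first
        | linear_combination -h32 / 2
        | linear_combination -(-h32 / 2)
    have A_tw : t * w' = w * t' := by first
        | linear_combination -(h00 + h22) / 2
        | linear_combination -(-(h00 + h22) / 2)
    have A_uv : u * v' = v * u' := by first
        | linear_combination (h22 - h00) / 2
        | linear_combination -((h22 - h00) / 2)
    -- conclude proportionality
    have final : ∀ lam : ℂ, s' = lam * s → t' = lam * t → u' = lam * u → v' = lam * v →
        w' = lam * w →
        ∃ (B : Module.End ℂ V) (a b : ℂ),
          (∀ x y : V, BV (B x) y = BV x (B y)) ∧ LinearMap.trace ℂ V B = 0 ∧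
            B₁ = a • B ∧ B₂ = b • B := by
      intro lam h1 h2 h3 h4 h5
      refine ⟨B₁, 1, lam, hB₁, htr₁, (one_smul _ _).symm, ?_⟩
      apply (LinearMap.toMatrix bb bb).injective
      rw [map_smul, hQ, hP]
      ext i j
      fin_cases i <;> fin_cases j <;>
        simp [Matrix.smul_apply, smul_eq_mul, h1, h2, h3, h4, h5, Matrix.vecHead, Matrix.vecTail]
    by_cases hs : s ≠ 0
    · refine final (s' / s) (by field_simp) ?_ ?_ ?_ ?_ <;> field_simp
      · first
        | linear_combination -A_st
        | linear_combination -(-A_st)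
      · first
        | linear_combination -A_su
        | linear_combination -(-A_su)
      · first
        | linear_combination -A_sv
        | linear_combination -(-A_sv)
      · first
        | linear_combination -A_sw
        | linear_combination -(-A_sw)
    push_neg at hs
    by_cases ht : t ≠ 0
    · refine final (t' / t) ?_ ?_ ?_ ?_ ?_ <;> field_simp
      · first
        | linear_combination A_st
        | linear_combination -(A_st)
      · first
        | linear_combination -A_tu
        | linear_combination -(-A_tu)
      · first
        | linear_combination -A_tv
        | linear_combination -(-A_tv)
      · first
        | linear_combination -A_tw
        | linear_combination -(-A_tw)
    push_neg at ht
    by_cases hu : u ≠ 0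
    · refine final (u' / u) ?_ ?_ ?_ ?_ ?_ <;> field_simp
      · first
        | linear_combination A_su
        | linear_combination -(A_su)
      · first
        | linear_combination A_tu
        | linear_combination -(A_tu)
      · first
        | linear_combination -A_uv
        | linear_combination -(-A_uv)
      · first
        | linear_combination -A_uw
        | linear_combination -(-A_uw)
    push_neg at hu
    by_cases hv : v ≠ 0
    · refine final (v' / v) ?_ ?_ ?_ ?_ ?_ <;> field_simp
      · first
        | linear_combination A_sv
        | linear_combination -(A_sv)
      · first
        | linear_combination A_tv
        | linear_combination -(A_tv)
      · first
        | linear_combination A_uv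
        | linear_combination -(A_uv)
      · first
        | linear_combination -A_vw
        | linear_combination -(-A_vw)
    push_neg at hv
    by_cases hw : w ≠ 0
    · refine final (w' / w) ?_ ?_ ?_ ?_ ?_ <;> field_simp
      · first
        | linear_combination A_sw
        | linear_combination -(A_sw)
      · first
        | linear_combination A_tw
        | linear_combination -(A_tw)
      · first
        | linear_combination A_uw
        | linear_combination -(A_uw)
      · first
        | linear_combination A_vw
        | linear_combination -(A_vw)
    push_neg at hw
    -- B₁ = 0
    refine ⟨B₂, 0, 1, hB₂, htr₂, ?_, (one_smul _ _).symm⟩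
    rw [zero_smul]
    apply (LinearMap.toMatrix bb bb).injective
    rw [hP, map_zero]
    ext i j
    fin_cases i <;> fin_cases j <;> simp [hs, ht, hu, hv, hw, Matrix.vecHead, Matrix.vecTail]
  · rintro ⟨B, a, b, -, -, rfl, rfl⟩
    rw [smul_mul_smul_comm, smul_mul_smul_comm, mul_comm a b]
end

section
/- Let V be a 4-dimensional symplectic ℂ-vector space and let B₁, B₂ be trace-free self-adjoint endomorphisms of V. Then the square of their commutator is a scalar endomorphism: there exists c ∈ ℂ with [B₁,B₂]² = c·id_V. -/
open Matrix

namespace Stmt18Aux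

abbrev M4 := Matrix (Fin 4) (Fin 4) ℂ

def pf (S : M4) : ℂ := S 0 1 * S 2 3 - S 0 2 * S 1 3 + S 0 3 * S 1 2

def pf2 (A B : M4) : ℂ :=
  A 0 1 * B 2 3 + B 0 1 * A 2 3 - A 0 2 * B 1 3 - B 0 2 * A 1 3 + A 0 3 * B 1 2 + B 0 3 * A 1 2

def pdual (S : M4) : M4 :=
  !![0, -S 2 3, S 1 3, -S 1 2;
     S 2 3, 0, -S 0 3, S 0 2;
     -S 1 3, S 0 3, 0, -S 0 1;
     S 1 2, -S 0 2, S 0 1, 0]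

lemma skew_entry {S : M4} (hS : Sᵀ = -S) (i j : Fin 4) : S j i = -S i j := by
  have := congrFun (congrFun hS i) j
  simpa using this

lemma skew_diag {S : M4} (hS : Sᵀ = -S) (i : Fin 4) : S i i = 0 := by
  have := skew_entry hS i i
  have h2 : S i i + S i i = 0 := by linear_combination this
  exact add_self_eq_zero.mp h2

lemma pdual_mul {S : M4} (hS : Sᵀ = -S) : pdual S * S = pf S • 1 := by
  have h := skew_entry hS
  ext i j
  fin_cases i <;> fin_cases j <;>
    simp [pdual, pf, Matrix.mul_apply, Fin.sum_univ_four, Matrix.one_apply,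
      h 0 1, h 0 2, h 0 3, h 1 2, h 1 3, h 2 3,
      skew_diag hS 0, skew_diag hS 1, skew_diag hS 2, skew_diag hS 3] <;> ring

lemma mul_pdual {S : M4} (hS : Sᵀ = -S) : S * pdual S = pf S • 1 := by
  have h := skew_entry hS
  ext i j
  fin_cases i <;> fin_cases j <;>
    simp [pdual, pf, Matrix.mul_apply, Fin.sum_univ_four, Matrix.one_apply,
      h 0 1, h 0 2, h 0 3, h 1 2, h 1 3, h 2 3,
      skew_diag hS 0, skew_diag hS 1, skew_diag hS 2, skew_diag hS 3] <;> ring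

lemma polar {A B : M4} (hA : Aᵀ = -A) (hB : Bᵀ = -B) :
    pdual A * B + pdual B * A = pf2 A B • 1 := by
  have ha := skew_entry hA
  have hb := skew_entry hB
  ext i j
  fin_cases i <;> fin_cases j <;>
    simp only [Matrix.add_apply, Matrix.mul_apply, Fin.sum_univ_four] <;>
    simp [pdual, pf2, Matrix.mul_apply, Fin.sum_univ_four, Matrix.one_apply,
      ha 0 1, ha 0 2, ha 0 3, ha 1 2, ha 1 3, ha 2 3,
      hb 0 1, hb 0 2, hb 0 3, hb 1 2, hb 1 3, hb 2 3,
      skew_diag hA 0, skew_diag hA 1, skew_diag hA 2, skew_diag hA 3,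
      skew_diag hB 0, skew_diag hB 1, skew_diag hB 2, skew_diag hB 3] <;> ring

lemma trace_pdual_mul {A B : M4} (hA : Aᵀ = -A) (hB : Bᵀ = -B) :
    (pdual A * B).trace = 2 * pf2 A B := by
  have ha := skew_entry hA
  have hb := skew_entry hB
  simp [Matrix.trace, Matrix.diag, pdual, pf2, Matrix.mul_apply, Fin.sum_univ_four,
      ha 0 1, ha 0 2, ha 0 3, ha 1 2, ha 1 3, ha 2 3,
      hb 0 1, hb 0 2, hb 0 3, hb 1 2, hb 1 3, hb 2 3,
      skew_diag hA 0, skew_diag hA 1, skew_diag hA 2, skew_diag hA 3,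
      skew_diag hB 0, skew_diag hB 1, skew_diag hB 2, skew_diag hB 3]
  ring


lemma pf_ne_zero {Ω : M4} (hΩ : Ωᵀ = -Ω) (hdet : Ω.det ≠ 0) : pf Ω ≠ 0 := by
  intro hp
  have hunit : IsUnit Ω.det := isUnit_iff_ne_zero.mpr hdet
  have h0 : Ω * pdual Ω = 0 := by rw [mul_pdual hΩ, hp, zero_smul]
  have hpd : pdual Ω = 0 := by
    have := congrArg (fun X => Ω⁻¹ * X) h0
    simpa [← Matrix.mul_assoc, Matrix.nonsing_inv_mul Ω hunit] using this
  have h := skew_entry hΩ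
  have hZ : Ω = 0 := by
    ext i j
    have e : ∀ a b : Fin 4, pdual Ω a b = 0 := fun a b => by rw [hpd]; rfl
    have e01 := e 3 2; have e02 := e 1 3; have e03 := e 2 1
    have e12 := e 3 0; have e13 := e 0 2; have e23 := e 1 0
    simp [pdual] at e01 e02 e03 e12 e13 e23
    fin_cases i <;> fin_cases j <;>
      simp [Matrix.zero_apply, e01, e02, e03, e12, e13, e23, h 0 1, h 0 2, h 0 3, h 1 2, h 1 3, h 2 3,
        skew_diag hΩ 0, skew_diag hΩ 1, skew_diag hΩ 2, skew_diag hΩ 3]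
  rw [hZ] at hdet
  simp at hdet

/-- a trace-free self-adjoint endomorphism of a 4-dim symplectic space squares to a scalar -/
lemma sq_scalar {Ω M : M4} (hΩ : Ωᵀ = -Ω) (hdet : Ω.det ≠ 0)
    (hM : (Ω * M)ᵀ = -(Ω * M)) (htr : M.trace = 0) :
    ∃ μ : ℂ, M * M = μ • 1 := by
  set p := pf Ω with hpdef
  have hp : p ≠ 0 := pf_ne_zero hΩ hdet
  set S := Ω * M with hSdef
  have hN : pdual Ω * S = p • M := by
    rw [hSdef, ← Matrix.mul_assoc, pdual_mul hΩ, Matrix.smul_mul, Matrix.one_mul]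
  -- trace condition kills the cross pfaffian
  have htrN : (pdual Ω * S).trace = 0 := by
    rw [hN, Matrix.trace_smul, htr, smul_zero]
  have hpf2 : pf2 Ω S = 0 := by
    have h' : 2 * pf2 Ω S = 0 := (trace_pdual_mul hΩ hM).symm.trans htrN
    exact (mul_eq_zero.mp h').resolve_left two_ne_zero
  have hanti : pdual Ω * S = -(pdual S * Ω) := by
    have := polar hΩ hM
    rw [hpf2, zero_smul] at this
    exact eq_neg_of_add_eq_zero_left this
  -- square
  have hsq : (pdual Ω * S) * (pdual Ω * S) = (-(pf S * p)) • 1 := by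
    calc (pdual Ω * S) * (pdual Ω * S) = (pdual Ω * S) * (-(pdual S * Ω)) := by rw [← hanti]
    _ = -(pdual Ω * (S * pdual S) * Ω) := by
        simp only [Matrix.mul_neg, Matrix.mul_assoc]
    _ = -(pdual Ω * (pf S • (1 : M4)) * Ω) := by rw [mul_pdual hM]
    _ = -(pf S • (pdual Ω * Ω)) := by
        simp [Matrix.mul_smul, Matrix.smul_mul]
    _ = (-(pf S * p)) • 1 := by
        rw [pdual_mul hΩ]
        simp [smul_smul, mul_comm]
        exact Or.inl hpdef.symm
  refine ⟨p⁻¹ * p⁻¹ * (-(pf S * p)), ?_⟩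
  have hM' : M = p⁻¹ • (pdual Ω * S) := by
    rw [hN, smul_smul, inv_mul_cancel₀ hp, one_smul]
  rw [hM', Matrix.smul_mul, Matrix.mul_smul, hsq]
  simp [smul_smul, mul_assoc]

lemma comm_sq {R : Type*} [Ring R] [Algebra ℂ R] (X Y : R) (μ ν lam : ℂ)
    (hX : X * X = μ • 1) (hY : Y * Y = ν • 1) (hXY : X * Y + Y * X = lam • 1) :
    (X * Y - Y * X) * (X * Y - Y * X) = (lam ^ 2 - 4 * (μ * ν)) • 1 := by
  have key : (X * Y - Y * X) * (X * Y - Y * X)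
      = (X * Y + Y * X) * (X * Y + Y * X) - 2 • (X * (Y * Y) * X) - 2 • (Y * (X * X) * Y) := by
    noncomm_ring
  rw [key, hX, hY, hXY]
  have e1 : (lam • (1 : R)) * (lam • 1) = (lam ^ 2) • 1 := by
    rw [smul_mul_smul_comm, one_mul, sq]
  have e2 : X * (ν • (1 : R)) * X = (ν * μ) • 1 := by
    rw [mul_smul_comm, mul_one, smul_mul_assoc, hX, smul_smul]
  have e3 : Y * (μ • (1 : R)) * Y = (μ * ν) • 1 := by
    rw [mul_smul_comm, mul_one, smul_mul_assoc, hY, smul_smul]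
  rw [e1, e2, e3]
  have e4 : (2 : ℕ) • ((ν * μ) • (1 : R)) = ((2 : ℂ) * (ν * μ)) • 1 := by
    rw [two_smul, two_mul, add_smul]
  have e5 : (2 : ℕ) • ((μ * ν) • (1 : R)) = ((2 : ℂ) * (μ * ν)) • 1 := by
    rw [two_smul, two_mul, add_smul]
  rw [e4, e5, ← sub_smul, ← sub_smul]
  congr 1
  ring

lemma key {Ω M₁ M₂ : M4} (hΩ : Ωᵀ = -Ω) (hdet : Ω.det ≠ 0)
    (h1 : (Ω * M₁)ᵀ = -(Ω * M₁)) (h2 : (Ω * M₂)ᵀ = -(Ω * M₂))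
    (ht1 : M₁.trace = 0) (ht2 : M₂.trace = 0) :
    ∃ c : ℂ, (M₁ * M₂ - M₂ * M₁) * (M₁ * M₂ - M₂ * M₁) = c • 1 := by
  obtain ⟨μ, hμ⟩ := sq_scalar hΩ hdet h1 ht1
  obtain ⟨ν, hν⟩ := sq_scalar hΩ hdet h2 ht2
  have h12 : (Ω * (M₁ + M₂))ᵀ = -(Ω * (M₁ + M₂)) := by
    rw [Matrix.mul_add, Matrix.transpose_add, h1, h2]
    abel
  have ht12 : (M₁ + M₂).trace = 0 := by rw [Matrix.trace_add, ht1, ht2, add_zero]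
  obtain ⟨κ, hκ⟩ := sq_scalar hΩ hdet h12 ht12
  have hXY : M₁ * M₂ + M₂ * M₁ = (κ - μ - ν) • 1 := by
    have expand : (M₁ + M₂) * (M₁ + M₂) = M₁ * M₁ + (M₁ * M₂ + M₂ * M₁) + M₂ * M₂ := by
      noncomm_ring
    rw [expand, hμ, hν] at hκ
    have : M₁ * M₂ + M₂ * M₁ = κ • 1 - μ • 1 - ν • 1 := by
      rw [← hκ]; abel
    rw [this, ← sub_smul, ← sub_smul]
  exact ⟨(κ - μ - ν) ^ 2 - 4 * (μ * ν), comm_sq M₁ M₂ μ ν (κ - μ - ν) hμ hν hXY⟩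

end Stmt18Aux

/-- Let `V` be a 4-dimensional symplectic ℂ-vector space and `B₁, B₂`
trace-free self-adjoint endomorphisms of `V`.  Then `[B₁,B₂]²` is a scalar:
there is `c : ℂ` with `[B₁,B₂]² = c • id`. -/
theorem stmt18
    (V : Type) [AddCommGroup V] [Module ℂ V] [FiniteDimensional ℂ V]
    (BV : LinearMap.BilinForm ℂ V)
    (hVnd : BV.Nondegenerate)
    (hVsymp : ∀ u v : V, BV u v = -BV v u)
    (hV4 : Module.finrank ℂ V = 4)
    (B₁ B₂ : Module.End ℂ V)
    (hB₁ : ∀ u v : V, BV (B₁ u) v = BV u (B₁ v))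
    (hB₂ : ∀ u v : V, BV (B₂ u) v = BV u (B₂ v))
    (htr₁ : LinearMap.trace ℂ V B₁ = 0) (htr₂ : LinearMap.trace ℂ V B₂ = 0) :
    ∃ c : ℂ, (B₁ * B₂ - B₂ * B₁) ^ 2 = c • (1 : Module.End ℂ V) := by
  classical
  let b : Module.Basis (Fin 4) ℂ V := (Module.finBasis ℂ V).reindex (finCongr hV4)
  set Ωm : Matrix (Fin 4) (Fin 4) ℂ := LinearMap.BilinForm.toMatrix b BV with hΩm
  set M₁ := LinearMap.toMatrix b b B₁ with hM₁
  set M₂ := LinearMap.toMatrix b b B₂ with hM₂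
  have hΩskew : Ωmᵀ = -Ωm := by
    ext i j
    rw [Matrix.transpose_apply, Matrix.neg_apply, hΩm,
      BilinForm.toMatrix_apply, BilinForm.toMatrix_apply]
    exact (hVsymp (b j) (b i))
  have hdet : Ωm.det ≠ 0 :=
    (LinearMap.BilinForm.nondegenerate_iff_det_ne_zero b).mp hVnd
  have hsa : ∀ (B : Module.End ℂ V), (∀ u v, BV (B u) v = BV u (B v)) →
      (Ωm * LinearMap.toMatrix b b B)ᵀ = -(Ωm * LinearMap.toMatrix b b B) := by
    intro B hB
    have hcomp : BV.compLeft B = BV.compRight B := by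
      ext u v
      rw [LinearMap.BilinForm.compLeft_apply, LinearMap.BilinForm.compRight_apply]
      exact hB u v
    have hmat := congrArg (LinearMap.BilinForm.toMatrix b) hcomp
    rw [BilinForm.toMatrix_compLeft, BilinForm.toMatrix_compRight] at hmat
    calc (Ωm * LinearMap.toMatrix b b B)ᵀ
        = (LinearMap.toMatrix b b B)ᵀ * Ωmᵀ := by rw [Matrix.transpose_mul]
      _ = (LinearMap.toMatrix b b B)ᵀ * (-Ωm) := by rw [hΩskew]
      _ = -((LinearMap.toMatrix b b B)ᵀ * Ωm) := by rw [Matrix.mul_neg]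
      _ = -(Ωm * LinearMap.toMatrix b b B) := by rw [hΩm, hmat]
  have ht1 : M₁.trace = 0 := by
    rw [hM₁, ← LinearMap.trace_eq_matrix_trace ℂ b B₁]; exact htr₁
  have ht2 : M₂.trace = 0 := by
    rw [hM₂, ← LinearMap.trace_eq_matrix_trace ℂ b B₂]; exact htr₂
  obtain ⟨c, hc⟩ := Stmt18Aux.key hΩskew hdet (hsa B₁ hB₁) (hsa B₂ hB₂) ht1 ht2
  refine ⟨c, (LinearMap.toMatrix b b).injective ?_⟩
  rw [sq]
  simp only [map_sub, _root_.map_smul, LinearMap.toMatrix_mul, LinearMap.toMatrix_one]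
  exact hc
end

section
/- Let V be a 4-dimensional symplectic ℂ-vector space and W a 3-dimensional orthogonal ℂ-vector space. If B₁, B₂ are trace-free self-adjoint endomorphisms of V and i ∈ Hom(W,V) satisfies [B₁,B₂] + ii* = 0, then (ii*)² = 0. -/
open Matrix

local notation "M4" => Matrix (Fin 4) (Fin 4) ℂ

lemma skew_exists' (J : M4) (hJ : Jᵀ = -J) :
    ∃ a b c d e f : ℂ,
      J = !![0,a,b,c; -a,0,d,e; -b,-d,0,f; -c,-e,-f,0] := by
  have h : ∀ i j : Fin 4, J j i = -(J i j) := by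
    intro i j
    have := congrFun (congrFun hJ i) j
    simpa [Matrix.transpose_apply] using this
  have h00 : J 0 0 = 0 := by have := h 0 0; linear_combination this/2
  have h11 : J 1 1 = 0 := by have := h 1 1; linear_combination this/2
  have h22 : J 2 2 = 0 := by have := h 2 2; linear_combination this/2
  have h33 : J 3 3 = 0 := by have := h 3 3; linear_combination this/2
  refine ⟨J 0 1, J 0 2, J 0 3, J 1 2, J 1 3, J 2 3, ?_⟩
  have he : J = !![J 0 0, J 0 1, J 0 2, J 0 3; J 1 0, J 1 1, J 1 2, J 1 3;
           J 2 0, J 2 1, J 2 2, J 2 3; J 3 0, J 3 1, J 3 2, J 3 3] :=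
    (Matrix.etaExpand_eq J).symm
  rw [h00, h11, h22, h33, h 0 1, h 0 2, h 0 3, h 1 2, h 1 3, h 2 3] at he
  exact he

lemma jt_mul_self' (a b c d e f : ℂ) :
    (!![0,f,-e,d; -f,0,c,-b; e,-c,0,a; -d,b,-a,0] : M4) *
      !![0,a,b,c; -a,0,d,e; -b,-d,0,f; -c,-e,-f,0] =
      (-(a*f - b*e + c*d)) • 1 := by
  ext i j
  fin_cases i <;> fin_cases j <;>
    simp [Matrix.mul_apply, Fin.sum_univ_succ, Matrix.one_apply] <;> ring

lemma det_skew' (a b c d e f : ℂ) :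
    (!![0,a,b,c; -a,0,d,e; -b,-d,0,f; -c,-e,-f,0] : M4).det =
      (a*f - b*e + c*d)^2 := by
  rw [Matrix.det_succ_row_zero]
  simp [Fin.sum_univ_succ, Matrix.det_fin_three, Fin.succAbove, Matrix.submatrix]
  ring

lemma jt_mul_K' (a b c d e f p q r s t u : ℂ) :
    (!![0,f,-e,d; -f,0,c,-b; e,-c,0,a; -d,b,-a,0] : M4) *
      !![0,p,q,r; -p,0,s,t; -q,-s,0,u; -r,-t,-u,0] =
      !![-(f*p)+e*q-d*r, e*s-d*t, f*s-d*u, f*t-e*u;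
         -(c*q)+b*r, -(f*p)-c*s+b*t, -(f*q)+b*u, -(f*r)+c*u;
         c*p-a*r, e*p-a*t, e*q-c*s-a*u, e*r-c*t;
         -(b*p)+a*q, -(d*p)+a*s, -(d*q)+b*s, -(d*r)+b*t-a*u] := by
  ext i j
  fin_cases i <;> fin_cases j <;>
    simp [Matrix.mul_apply, Fin.sum_univ_succ] <;> ring

set_option maxHeartbeats 2000000 in
lemma key_identity' (a b c d e f p q r s t u : ℂ)
    (M : M4)
    (hM : M = !![-(f*p)+e*q-d*r, e*s-d*t, f*s-d*u, f*t-e*u;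
                 -(c*q)+b*r, -(f*p)-c*s+b*t, -(f*q)+b*u, -(f*r)+c*u;
                 c*p-a*r, e*p-a*t, e*q-c*s-a*u, e*r-c*t;
                 -(b*p)+a*q, -(d*p)+a*s, -(d*q)+b*s, -(d*r)+b*t-a*u]) :
    M * M = (M.trace/2) • M + ((M*M).trace/4 - M.trace^2/8) • 1 := by
  subst hM
  ext i j
  fin_cases i <;> fin_cases j <;>
    simp [Matrix.mul_apply, Fin.sum_univ_succ, Matrix.trace, Matrix.diag,
      Matrix.one_apply] <;> ring

/-- A trace-free self-adjoint endomorphism of a 4-dimensional symplectic space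
squares to a scalar. -/
lemma sq_scalar' (J A : M4) (hJ : Jᵀ = -J) (hdet : J.det ≠ 0)
    (hA : Aᵀ * J = J * A) (htr : A.trace = 0) :
    ∃ c : ℂ, A * A = c • 1 := by
  obtain ⟨a, b, c, d, e, f, rfl⟩ := skew_exists' J hJ
  have hPf : a*f - b*e + c*d ≠ 0 := by
    intro h0
    rw [det_skew' a b c d e f, h0] at hdet
    simp at hdet
  set Pf := a*f - b*e + c*d with hPfdef
  set J := (!![0,a,b,c; -a,0,d,e; -b,-d,0,f; -c,-e,-f,0] : M4) with hJdef
  have hKskew : (J * A)ᵀ = -(J * A) := by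
    rw [Matrix.transpose_mul, hJ, Matrix.mul_neg, hA]
  obtain ⟨p, q, r, s, t, u, hKeq⟩ := skew_exists' (J * A) hKskew
  set Jt := (!![0,f,-e,d; -f,0,c,-b; e,-c,0,a; -d,b,-a,0] : M4) with hJtdef
  have hM : Jt * (J * A) = (-Pf) • A := by
    rw [← Matrix.mul_assoc, hJtdef, hJdef, jt_mul_self' a b c d e f, ← hPfdef,
      Matrix.smul_mul, Matrix.one_mul]
  have hMexp : (-Pf) • A =
      !![-(f*p)+e*q-d*r, e*s-d*t, f*s-d*u, f*t-e*u;
         -(c*q)+b*r, -(f*p)-c*s+b*t, -(f*q)+b*u, -(f*r)+c*u;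
         c*p-a*r, e*p-a*t, e*q-c*s-a*u, e*r-c*t;
         -(b*p)+a*q, -(d*p)+a*s, -(d*q)+b*s, -(d*r)+b*t-a*u] := by
    rw [← hM, hKeq, hJtdef, jt_mul_K' a b c d e f p q r s t u]
  have L := key_identity' a b c d e f p q r s t u ((-Pf) • A) hMexp
  have htrM : ((-Pf) • A).trace = 0 := by
    rw [Matrix.trace_smul, htr]; simp
  have hsq : ((-Pf) • A) * ((-Pf) • A) = (Pf^2) • (A * A) := by
    rw [Matrix.smul_mul, Matrix.mul_smul, smul_smul]
    ring_nf
  have htr2 : (((-Pf) • A) * ((-Pf) • A)).trace = Pf^2 * (A*A).trace := by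
    rw [hsq, Matrix.trace_smul]; simp
  rw [hsq, htrM] at L
  simp only [Matrix.trace_smul, smul_eq_mul, zero_div, zero_smul, zero_add,
    ne_eq, OfNat.ofNat_ne_zero, not_false_eq_true, zero_pow, sub_zero] at L
  refine ⟨(A*A).trace / 4, ?_⟩
  apply smul_right_injective M4 (pow_ne_zero 2 hPf)
  simp only [smul_smul]
  rw [L]
  congr 1
  ring

lemma comm_sq' (A B : M4) (c₁ c₂ c₃ : ℂ)
    (h1 : A * A = c₁ • 1) (h2 : B * B = c₂ • 1)
    (h3 : (A + B) * (A + B) = c₃ • 1) :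
    ∃ s : ℂ, (B * A - A * B) * (B * A - A * B) = s • 1 := by
  set c : ℂ := c₃ - c₁ - c₂ with hc
  have hexp0 : A*A + A*B + (B*A + B*B) = c₃ • 1 := by
    rw [← h3, add_mul, mul_add, mul_add]
  have h4 : A*B + B*A = c • (1:M4) := by
    rw [hc, sub_smul, sub_smul]
    calc A*B + B*A = (A*A + A*B + (B*A + B*B)) - A*A - B*B := by abel
      _ = c₃•(1:M4) - c₁•1 - c₂•1 := by rw [hexp0, h1, h2]
  have hab : A*B = c • (1:M4) - B*A := eq_sub_of_add_eq h4
  have hP : (B*A)*(B*A) = c•(B*A) - (c₂*c₁)•(1:M4) := by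
    have e0 : (B*A)*(B*A) = B*((A*B)*A) := by noncomm_ring
    have e1 : B*((B*A)*A) = (B*B)*(A*A) := by noncomm_ring
    rw [e0, hab, sub_mul, smul_mul_assoc, one_mul, mul_sub, mul_smul_comm, e1, h1, h2,
      smul_mul_assoc, mul_smul_comm, smul_smul, mul_one]
  have hN : B*A - A*B = (2:ℂ)•(B*A) - c•(1:M4) := by
    rw [hab]
    module
  refine ⟨c*c - 4*(c₂*c₁), ?_⟩
  rw [hN]
  have e2 : ((2:ℂ)•(B*A) - c•(1:M4)) * ((2:ℂ)•(B*A) - c•(1:M4))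
      = (4:ℂ)•((B*A)*(B*A)) - (2*c)•(B*A) - (2*c)•(B*A) + (c*c)•(1:M4) := by
    simp only [sub_mul, mul_sub, smul_mul_assoc, mul_smul_comm, smul_smul, mul_one, one_mul]
    module
  rw [e2, hP]
  simp only [smul_sub, smul_smul]
  module

set_option maxHeartbeats 1000000 in
/-- Let `V` be a 4-dimensional symplectic ℂ-vector space and `W` a
3-dimensional orthogonal ℂ-vector space.  If `B₁, B₂` are trace-free self-adjoint
endomorphisms of `V` and `i : W → V` (with adjoint `j = i*`) satisfies
`[B₁,B₂] + i i* = 0`, then `(i i*)² = 0`. -/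
theorem stmt19
    (V W : Type) [AddCommGroup V] [Module ℂ V] [FiniteDimensional ℂ V]
    [AddCommGroup W] [Module ℂ W] [FiniteDimensional ℂ W]
    (BV : LinearMap.BilinForm ℂ V) (BW : LinearMap.BilinForm ℂ W)
    (hVnd : BV.Nondegenerate) (hWnd : BW.Nondegenerate)
    (hVsymp : ∀ u v : V, BV u v = -BV v u)
    (hWorth : ∀ u v : W, BW u v = BW v u)
    (hV4 : Module.finrank ℂ V = 4) (hW3 : Module.finrank ℂ W = 3)
    (B₁ B₂ : Module.End ℂ V) (i : W →ₗ[ℂ] V) (j : V →ₗ[ℂ] W)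
    (hB₁ : ∀ u v : V, BV (B₁ u) v = BV u (B₁ v))
    (hB₂ : ∀ u v : V, BV (B₂ u) v = BV u (B₂ v))
    (htr₁ : LinearMap.trace ℂ V B₁ = 0) (htr₂ : LinearMap.trace ℂ V B₂ = 0)
    (hadj : ∀ (w : W) (v : V), BW w (j v) = BV (i w) v)
    (hADHM : B₁ * B₂ - B₂ * B₁ + i ∘ₗ j = 0) :
    (i ∘ₗ j) ∘ₗ (i ∘ₗ j) = 0 := by
  classical
  let b : Module.Basis (Fin 4) ℂ V := Module.finBasisOfFinrankEq ℂ V hV4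
  set J : M4 := LinearMap.BilinForm.toMatrix b BV with hJdef
  set A₁ : M4 := LinearMap.toMatrix b b B₁ with hA₁def
  set A₂ : M4 := LinearMap.toMatrix b b B₂ with hA₂def
  set N : M4 := LinearMap.toMatrix b b (i ∘ₗ j) with hNdef
  -- J is skew
  have hJ : Jᵀ = -J := by
    ext k l
    simp only [Matrix.transpose_apply, Matrix.neg_apply, hJdef,
      _root_.BilinForm.toMatrix_apply]
    exact hVsymp (b l) (b k)
  -- J invertible
  have hdet : J.det ≠ 0 :=
    (LinearMap.BilinForm.nondegenerate_iff_det_ne_zero b).mp hVnd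
  -- self-adjointness at matrix level
  have hselfadj : ∀ (T : Module.End ℂ V), (∀ u v : V, BV (T u) v = BV u (T v)) →
      (LinearMap.toMatrix b b T)ᵀ * J = J * (LinearMap.toMatrix b b T) := by
    intro T hT
    have hforms : BV.compLeft T = BV.compRight T := by
      ext u v
      simpa [LinearMap.BilinForm.compLeft_apply, LinearMap.BilinForm.compRight_apply] using hT u v
    have := congrArg (LinearMap.BilinForm.toMatrix b) hforms
    rwa [_root_.BilinForm.toMatrix_compLeft, _root_.BilinForm.toMatrix_compRight] at this
  have hadj₁ : A₁ᵀ * J = J * A₁ := hselfadj B₁ hB₁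
  have hadj₂ : A₂ᵀ * J = J * A₂ := hselfadj B₂ hB₂
  have hadj₁₂ : (A₁ + A₂)ᵀ * J = J * (A₁ + A₂) := by
    rw [Matrix.transpose_add, Matrix.add_mul, Matrix.mul_add, hadj₁, hadj₂]
  -- traces
  have htrm₁ : A₁.trace = 0 := by
    rw [hA₁def, ← LinearMap.trace_eq_matrix_trace ℂ b B₁]; exact htr₁
  have htrm₂ : A₂.trace = 0 := by
    rw [hA₂def, ← LinearMap.trace_eq_matrix_trace ℂ b B₂]; exact htr₂
  have htrm₁₂ : (A₁ + A₂).trace = 0 := by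
    rw [Matrix.trace_add, htrm₁, htrm₂, add_zero]
  -- ADHM at matrix level
  have hADHMm : A₁ * A₂ - A₂ * A₁ + N = 0 := by
    have := congrArg (LinearMap.toMatrix b b) hADHM
    rwa [map_add, map_sub, LinearMap.toMatrix_mul, LinearMap.toMatrix_mul, map_zero] at this
  have hNcomm : N = A₂ * A₁ - A₁ * A₂ := by
    rw [eq_neg_of_add_eq_zero_right hADHMm, neg_sub]
  -- squares are scalars
  obtain ⟨c₁, hc₁⟩ := sq_scalar' J A₁ hJ hdet hadj₁ htrm₁
  obtain ⟨c₂, hc₂⟩ := sq_scalar' J A₂ hJ hdet hadj₂ htrm₂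
  obtain ⟨c₃, hc₃⟩ := sq_scalar' J (A₁ + A₂) hJ hdet hadj₁₂ htrm₁₂
  obtain ⟨s, hs⟩ := comm_sq' A₁ A₂ c₁ c₂ c₃ hc₁ hc₂ hc₃
  rw [← hNcomm] at hs
  -- back to linear maps: (i∘j)∘(i∘j) = s • id
  have hcomp : (i ∘ₗ j) ∘ₗ (i ∘ₗ j) = s • (LinearMap.id : V →ₗ[ℂ] V) := by
    apply (LinearMap.toMatrix b b).injective
    rw [LinearMap.toMatrix_comp b b b, _root_.map_smul, LinearMap.toMatrix_id, ← hNdef, hs]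
  -- j is not injective
  have hnotinj : ¬ Function.Injective j := by
    intro hinj
    have := LinearMap.finrank_le_finrank_of_injective hinj
    rw [hV4, hW3] at this
    omega
  obtain ⟨x, y, hxy, hne⟩ := Function.not_injective_iff.mp hnotinj
  have hv0 : j (x - y) = 0 := by rw [map_sub, hxy, sub_self]
  have hvne : x - y ≠ 0 := sub_ne_zero_of_ne hne
  have hs0 : s = 0 := by
    have := congrArg (fun (T : V →ₗ[ℂ] V) => T (x - y)) hcomp
    simp only [LinearMap.comp_apply, LinearMap.smul_apply, LinearMap.id_apply] at this
    rw [hv0, map_zero, map_zero, map_zero] at this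
    exact ((smul_eq_zero.mp this.symm).resolve_right hvne)
  rw [hcomp, hs0, zero_smul]
end
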